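/- arXiv:1706.02563 — 8 statements merged into one kernel-verified Lean document; each statement's English description precedes it below -/
import Mathlib

section
/- Let k ≥ 2, let f₁, …, f_k be measurable probability density functions on ℝ, and let p lie in the open simplex. Let D(p) be the (k−1)×(k−1) matrix with entries D_{jh} = δ_{jh}/p_j + 1/p_k (δ_{jh} the Kronecker delta). Then D(p) − M(p) is positive semidefinite: for every v ∈ ℝ^{k−1}, vᵀ M(p) v ≤ vᵀ D(p) v. (This is the information-loss inequality: the Fisher information of the observed mixture is dominated by the Fisher information of the complete, data-augmented model, whose Fisher matrix for the weights is D(p).) -/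
open MeasureTheory Matrix

noncomputable section

/-- The mixture density `∑ ℓ pℓ fℓ(x)`. -/
def mixDens {k : ℕ} (f : Fin k → ℝ → ℝ) (p : Fin k → ℝ) (x : ℝ) : ℝ :=
  ∑ ℓ, p ℓ * f ℓ x

/-- The `(k-1) × (k-1)` Fisher information matrix for the weights of a mixture of
`k = m + 2` densities, with entries
`M_{jh}(p) = ∫ (f_j - f_{k-1})(f_h - f_{k-1}) / (∑ℓ pℓ fℓ)` (division by zero being zero). -/
def weightFisher {m : ℕ} (f : Fin (m + 2) → ℝ → ℝ) (p : Fin (m + 2) → ℝ) :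
    Matrix (Fin (m + 1)) (Fin (m + 1)) ℝ := fun j h =>
  ∫ x : ℝ,
    (f j.castSucc x - f (Fin.last (m + 1)) x) * (f h.castSucc x - f (Fin.last (m + 1)) x) /
      mixDens f p x

/-- The Fisher information matrix for the weights of the complete (data-augmented)
model, i.e. of the multinomial model: `D_{jh} = δ_{jh}/p_j + 1/p_{k-1}`. -/
def completeWeightFisher {m : ℕ} (p : Fin (m + 2) → ℝ) :
    Matrix (Fin (m + 1)) (Fin (m + 1)) ℝ := fun j h =>
  (if j = h then (p j.castSucc)⁻¹ else 0) + (p (Fin.last (m + 1)))⁻¹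

/-- Pointwise Cauchy–Schwarz: `(∑ c y)² / (∑ w y) ≤ ∑ (c²/w) y`. -/
lemma cs_div {n : ℕ} (c w y : Fin n → ℝ) (hw : ∀ i, 0 < w i) (hy : ∀ i, 0 ≤ y i) :
    (∑ i, c i * y i) ^ 2 / (∑ i, w i * y i) ≤ ∑ i, (c i) ^ 2 / w i * y i := by
  have hSnn : 0 ≤ ∑ i, w i * y i :=
    Finset.sum_nonneg fun i _ => mul_nonneg (hw i).le (hy i)
  rcases hSnn.eq_or_lt with h0 | hS
  · have hy0 : ∀ i, y i = 0 := by
      intro i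
      have h := (Finset.sum_eq_zero_iff_of_nonneg
        (fun i _ => mul_nonneg (hw i).le (hy i))).1 h0.symm i (Finset.mem_univ i)
      exact (mul_eq_zero.1 h).resolve_left (hw i).ne'
    simp [hy0]
  · rw [div_le_iff₀ hS]
    refine Finset.sum_sq_le_sum_mul_sum_of_sq_eq_mul _
      (fun i _ => mul_nonneg (div_nonneg (sq_nonneg _) (hw i).le) (hy i))
      (fun i _ => mul_nonneg (hw i).le (hy i)) (fun i _ => ?_)
    rw [div_mul_eq_mul_div, div_mul_eq_mul_div, eq_div_iff (hw i).ne']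
    ring

/-- Two-term Cauchy–Schwarz. -/
lemma two_cs {a b pa pb S : ℝ} (ha : 0 ≤ a) (hb : 0 ≤ b) (hpa : 0 < pa) (hpb : 0 < pb)
    (hS : pa * a + pb * b ≤ S) : (a - b) ^ 2 ≤ (pa⁻¹ * a + pb⁻¹ * b) * S := by
  have e : (pa⁻¹ * a + pb⁻¹ * b) * (pa * a + pb * b)
      = a ^ 2 + b ^ 2 + (a * b) * (pa⁻¹ * pb + pb⁻¹ * pa) := by
    field_simp
    ring
  have ht : 0 ≤ (a * b) * (pa⁻¹ * pb + pb⁻¹ * pa) := by positivity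
  have h1 : (a - b) ^ 2 ≤ (pa⁻¹ * a + pb⁻¹ * b) * (pa * a + pb * b) := by
    rw [e]; nlinarith [mul_nonneg ha hb]
  refine h1.trans (mul_le_mul_of_nonneg_left hS (by positivity))

/-- the information-loss inequality.  For a mixture of `m + 2 ≥ 2`
measurable probability densities and `p` in the open simplex, `D(p) - M(p)` is
positive semidefinite: `vᵀ M(p) v ≤ vᵀ D(p) v` for every `v`. -/
theorem weightFisher_le_completeWeightFisher (m : ℕ) (f : Fin (m + 2) → ℝ → ℝ)
    (hmeas : ∀ ℓ, Measurable (f ℓ)) (hnonneg : ∀ ℓ x, 0 ≤ f ℓ x)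
    (hpdf : ∀ ℓ, ∫ x : ℝ, f ℓ x = 1)
    (p : Fin (m + 2) → ℝ) (hp : ∀ ℓ, 0 < p ℓ ∧ p ℓ < 1) (hsum : ∑ ℓ, p ℓ = 1) :
    ∀ v : Fin (m + 1) → ℝ,
      v ⬝ᵥ (weightFisher f p).mulVec v ≤ v ⬝ᵥ (completeWeightFisher p).mulVec v := by
  intro v
  set L : Fin (m + 2) := Fin.last (m + 1) with hL
  have hp0 : ∀ ℓ, 0 < p ℓ := fun ℓ => (hp ℓ).1
  have hmixnn : ∀ x, 0 ≤ mixDens f p x := fun x =>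
    Finset.sum_nonneg fun ℓ _ => mul_nonneg (hp0 ℓ).le (hnonneg ℓ x)
  have hmix0 : ∀ x, mixDens f p x = 0 → ∀ ℓ, f ℓ x = 0 := by
    intro x hx ℓ
    have h := (Finset.sum_eq_zero_iff_of_nonneg
      (fun ℓ _ => mul_nonneg (hp0 ℓ).le (hnonneg ℓ x))).1 hx ℓ (Finset.mem_univ ℓ)
    exact (mul_eq_zero.1 h).resolve_left (hp0 ℓ).ne'
  have hmixmeas : Measurable (mixDens f p) :=
    Finset.measurable_sum _ fun ℓ _ => (hmeas ℓ).const_mul _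
  have hfint : ∀ ℓ, Integrable (f ℓ) := by
    intro ℓ
    by_contra h
    have h1 := hpdf ℓ
    rw [integral_undef h] at h1
    norm_num at h1
  -- the centered densities
  set A : Fin (m + 1) → ℝ → ℝ := fun j x => f j.castSucc x - f L x with hA
  clear_value A
  have hAmeas : ∀ j, Measurable (A j) := fun j => by
    simp only [hA]; exact (hmeas _).sub (hmeas _)
  -- lower bound for the mixture by a pair of terms
  have hpair : ∀ (j : Fin (m + 1)) (x : ℝ),
      p j.castSucc * f j.castSucc x + p L * f L x ≤ mixDens f p x := by
    intro j x
    have hne : j.castSucc ≠ L := (Fin.castSucc_lt_last j).ne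
    have h2 := Finset.sum_le_sum_of_subset_of_nonneg
      (Finset.subset_univ ({j.castSucc, L} : Finset (Fin (m + 2))))
      (f := fun ℓ => p ℓ * f ℓ x) (fun i _ _ => mul_nonneg (hp0 i).le (hnonneg i x))
    rw [Finset.sum_pair hne] at h2
    exact h2
  set B : Fin (m + 1) → ℝ → ℝ := fun j x =>
    (p j.castSucc)⁻¹ * f j.castSucc x + (p L)⁻¹ * f L x with hB
  clear_value B
  -- key diagonal bound
  have hsq : ∀ (j : Fin (m + 1)) (x : ℝ), (A j x) ^ 2 / mixDens f p x ≤ B j x := by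
    intro j x
    simp only [hA, hB]
    rcases (hmixnn x).eq_or_lt with h0 | hpos
    · have h := hmix0 x h0.symm
      simp [h]
    · rw [div_le_iff₀ hpos]
      exact two_cs (hnonneg _ x) (hnonneg _ x) (hp0 _) (hp0 _) (hpair j x)
  have hBnn : ∀ j x, 0 ≤ B j x := fun j x => by
    simp only [hB]
    exact add_nonneg (mul_nonneg (inv_nonneg.2 (hp0 _).le) (hnonneg _ x))
      (mul_nonneg (inv_nonneg.2 (hp0 _).le) (hnonneg _ x))
  have hBint : ∀ j, Integrable (B j) := fun j => by
    simp only [hB]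
    exact ((hfint _).const_mul _).add ((hfint _).const_mul _)
  -- entry bounds
  have habs : ∀ (j h : Fin (m + 1)) (x : ℝ),
      |A j x * A h x / mixDens f p x| ≤ B j x + B h x := by
    intro j h x
    rcases (hmixnn x).eq_or_lt with h0 | hpos
    · rw [← h0, div_zero, abs_zero]
      exact add_nonneg (hBnn j x) (hBnn h x)
    · rw [abs_div, abs_of_pos hpos]
      have h1 : |A j x * A h x| ≤ ((A j x) ^ 2 + (A h x) ^ 2) / 2 := by
        rw [abs_mul]
        have h2 := two_mul_le_add_sq (|A j x|) (|A h x|)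
        rw [sq_abs, sq_abs] at h2
        linarith
      calc |A j x * A h x| / mixDens f p x
          ≤ (((A j x) ^ 2 + (A h x) ^ 2) / 2) / mixDens f p x := by gcongr
        _ = ((A j x) ^ 2 / mixDens f p x + (A h x) ^ 2 / mixDens f p x) / 2 := by ring
        _ ≤ (B j x + B h x) / 2 := by linarith [hsq j x, hsq h x]
        _ ≤ B j x + B h x := by linarith [hBnn j x, hBnn h x]
  have hEmeas : ∀ j h : Fin (m + 1),
      Measurable (fun x => A j x * A h x / mixDens f p x) := fun j h =>
    ((hAmeas j).mul (hAmeas h)).div hmixmeas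
  have hEint : ∀ j h : Fin (m + 1),
      Integrable (fun x => A j x * A h x / mixDens f p x) := fun j h =>
    ((hBint j).add (hBint h)).mono' (hEmeas j h).aestronglyMeasurable
      (Filter.Eventually.of_forall fun x => by
        rw [Real.norm_eq_abs]; exact habs j h x)
  -- combined coefficient vector
  set c : Fin (m + 2) → ℝ := Fin.snoc v (-(∑ j, v j)) with hc
  clear_value c
  set g : ℝ → ℝ := fun x => ∑ j, v j * A j x with hg
  clear_value g
  have hgmeas : Measurable g := by
    simp only [hg]
    exact Finset.measurable_sum _ fun j _ => ((hAmeas j).const_mul _)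
  have hgc : ∀ x, g x = ∑ ℓ, c ℓ * f ℓ x := by
    intro x
    rw [Fin.sum_univ_castSucc (f := fun ℓ => c ℓ * f ℓ x)]
    simp only [hc, Fin.snoc_castSucc, Fin.snoc_last, hg, hA, mul_sub,
      Finset.sum_sub_distrib, ← Finset.sum_mul]
    ring
  -- the pointwise Cauchy-Schwarz bound
  have hkey : ∀ x, (g x) ^ 2 / mixDens f p x ≤ ∑ ℓ, (c ℓ) ^ 2 / p ℓ * f ℓ x := by
    intro x
    rw [hgc x]
    exact cs_div c p (fun ℓ => f ℓ x) hp0 (fun ℓ => hnonneg ℓ x)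
  have hboundint : Integrable (fun x => ∑ ℓ, (c ℓ) ^ 2 / p ℓ * f ℓ x) :=
    integrable_finset_sum _ fun ℓ _ => (hfint ℓ).const_mul _
  have hgint : Integrable (fun x => (g x) ^ 2 / mixDens f p x) := by
    refine hboundint.mono' (((hgmeas.pow_const 2).div hmixmeas).aestronglyMeasurable)
      (Filter.Eventually.of_forall fun x => ?_)
    rw [Real.norm_eq_abs, abs_of_nonneg (div_nonneg (sq_nonneg _) (hmixnn x))]
    exact hkey x
  -- LHS rewrite
  have e1 : v ⬝ᵥ (weightFisher f p).mulVec v = ∫ x, (g x) ^ 2 / mixDens f p x := by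
    have e3 : ∀ x, ∑ j, ∑ h, (v j * v h) * (A j x * A h x / mixDens f p x)
        = (g x) ^ 2 / mixDens f p x := by
      intro x
      rw [hg, sq, Finset.sum_mul_sum, Finset.sum_div]
      refine Finset.sum_congr rfl fun j _ => ?_
      rw [Finset.sum_div]
      exact Finset.sum_congr rfl fun h _ => by rw [mul_div_assoc]; ring
    have hWF : ∀ j h : Fin (m + 1), weightFisher f p j h
        = ∫ x, A j x * A h x / mixDens f p x := by
      intro j h
      simp only [weightFisher, hA, hL]
    calc v ⬝ᵥ (weightFisher f p).mulVec v
        = ∑ j, ∑ h, ∫ x, (v j * v h) * (A j x * A h x / mixDens f p x) := by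
          simp only [dotProduct, Matrix.mulVec, hWF, Finset.mul_sum]
          refine Finset.sum_congr rfl fun j _ => Finset.sum_congr rfl fun h _ => ?_
          rw [integral_const_mul]
          ring
      _ = ∑ j, ∫ x, ∑ h, (v j * v h) * (A j x * A h x / mixDens f p x) := by
          refine Finset.sum_congr rfl fun j _ => ?_
          exact (integral_finset_sum _ fun h _ => (hEint j h).const_mul _).symm
      _ = ∫ x, ∑ j, ∑ h, (v j * v h) * (A j x * A h x / mixDens f p x) := by
          exact (integral_finset_sum _ fun j _ =>
            integrable_finset_sum _ fun h _ => (hEint j h).const_mul _).symm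
      _ = ∫ x, (g x) ^ 2 / mixDens f p x := by
          exact integral_congr_ae (Filter.Eventually.of_forall fun x => e3 x)
  -- RHS rewrite
  have e2 : v ⬝ᵥ (completeWeightFisher p).mulVec v = ∑ ℓ, (c ℓ) ^ 2 / p ℓ := by
    rw [Fin.sum_univ_castSucc (f := fun ℓ => (c ℓ) ^ 2 / p ℓ)]
    simp only [hc, Fin.snoc_castSucc, Fin.snoc_last, neg_sq, dotProduct,
      Matrix.mulVec, completeWeightFisher, add_mul, ite_mul, zero_mul,
      Finset.sum_add_distrib, Finset.sum_ite_eq, Finset.mem_univ, if_true,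
      mul_add, ← Finset.sum_mul, ← Finset.mul_sum]
    rw [Finset.sum_mul]
    refine congrArg₂ (· + ·) (Finset.sum_congr rfl fun j _ => by
      rw [div_eq_mul_inv]; ring) ?_
    rw [← Finset.sum_mul, sq, div_eq_mul_inv]
    ring
  rw [e1, e2]
  calc ∫ x, (g x) ^ 2 / mixDens f p x
      ≤ ∫ x, ∑ ℓ, (c ℓ) ^ 2 / p ℓ * f ℓ x :=
        integral_mono hgint hboundint hkey
    _ = ∑ ℓ, (c ℓ) ^ 2 / p ℓ := by
        rw [integral_finset_sum _ fun ℓ _ => (hfint ℓ).const_mul _]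
        refine Finset.sum_congr rfl fun ℓ _ => ?_
        rw [integral_const_mul, hpdf, mul_one]
end
end

section
/- Let k ≥ 2, let f₁, …, f_k be measurable probability density functions on ℝ, and let p lie in the open simplex. Then det M(p) ≤ (p₁ p₂ ⋯ p_k)^{−1}, and consequently √(det M(p)) ≤ Π_{ℓ=1}^k p_ℓ^{−1/2}; that is, the Jeffreys prior for the mixture weights is pointwise bounded by (the unnormalized density of) the Dirichlet 𝒟(1/2, …, 1/2) distribution. -/
open MeasureTheory

noncomputable section

namespace WFAux

open Matrix

/-! ### Linear algebra auxiliary lemmas -/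

lemma eigenvalues_le_one_of_psd {n : Type*} [Fintype n] [DecidableEq n]
    {C : Matrix n n ℝ} (hC : C.PosSemidef)
    (h1 : (1 - C).PosSemidef) (j : n) : hC.1.eigenvalues j ≤ 1 := by
  set v : n → ℝ := ⇑(hC.1.eigenvectorBasis j) with hv
  have hv0 : v ≠ 0 := by
    intro h
    exact (hC.1.eigenvectorBasis.orthonormal).ne_zero j (by ext i; exact congrFun h i)
  have hev : C *ᵥ v = hC.1.eigenvalues j • v := hC.1.mulVec_eigenvectorBasis j
  have hq := h1.dotProduct_mulVec_nonneg v
  have hvv : (0:ℝ) < v ⬝ᵥ v := by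
    rcases Function.ne_iff.mp hv0 with ⟨i, hi⟩
    have h1' : ∀ i ∈ Finset.univ, 0 ≤ v i * v i := fun i _ => mul_self_nonneg _
    exact Finset.sum_pos' h1' ⟨i, Finset.mem_univ i, mul_self_pos.mpr (by simpa using hi)⟩
  have hexp : star v ⬝ᵥ (1 - C) *ᵥ v = (1 - hC.1.eigenvalues j) * (v ⬝ᵥ v) := by
    rw [sub_mulVec, hev, one_mulVec]
    simp [dotProduct_sub, dotProduct_smul, star_trivial, sub_mul, smul_eq_mul]
  rw [hexp] at hq
  nlinarith

open scoped MatrixOrder in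
lemma det_le_det_of_psd_le {n : Type*} [Fintype n] [DecidableEq n]
    {A B : Matrix n n ℝ} (hA : A.PosSemidef) (hB : B.PosDef)
    (hBA : (B - A).PosSemidef) : A.det ≤ B.det := by
  have hBpsd := hB.posSemidef
  set S := CFC.sqrt B with hSdef
  have hS : S.PosSemidef := (CFC.sqrt_nonneg B).posSemidef
  have hSS : S * S = B := CFC.sqrt_mul_sqrt_self B hBpsd.nonneg
  have hdetB : 0 < B.det := hB.det_pos
  have hdetS : S.det ≠ 0 := by
    intro h
    rw [← hSS, det_mul, h, mul_zero] at hdetB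
    exact lt_irrefl _ hdetB
  have hU : IsUnit S.det := isUnit_iff_ne_zero.mpr hdetS
  have hSinv : S * S⁻¹ = 1 := mul_nonsing_inv _ hU
  have hSinv' : S⁻¹ * S = 1 := nonsing_inv_mul _ hU
  have hSiH : (S⁻¹).IsHermitian := hS.1.inv
  set C := S⁻¹ * A * S⁻¹ with hCdef
  have hC : C.PosSemidef := by
    have := hA.mul_mul_conjTranspose_same S⁻¹
    rwa [hSiH.eq] at this
  have hone : S⁻¹ * B * S⁻¹ = 1 := by
    rw [← hSS, ← Matrix.mul_assoc, hSinv', Matrix.one_mul, hSinv]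
  have h1C : (1 - C).PosSemidef := by
    have := hBA.mul_mul_conjTranspose_same S⁻¹
    rwa [hSiH.eq, Matrix.mul_sub, Matrix.sub_mul, hone] at this
  have hdetC : C.det ≤ 1 := by
    rw [hC.1.det_eq_prod_eigenvalues]
    calc ∏ i, hC.1.eigenvalues i ≤ ∏ i, (1:ℝ) := by
          apply Finset.prod_le_prod (fun i _ => hC.eigenvalues_nonneg i)
            (fun i _ => eigenvalues_le_one_of_psd hC h1C i)
      _ = 1 := by simp
  have hArec : A = S * C * S := by
    rw [hCdef, ← Matrix.mul_assoc, ← Matrix.mul_assoc, hSinv, Matrix.one_mul,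
      Matrix.mul_assoc, hSinv', Matrix.mul_one]
  clear_value S C
  have hkey : A.det = C.det * B.det := by
    rw [hArec, det_mul, det_mul, ← hSS, det_mul]; ring
  rw [hkey]
  calc C.det * B.det ≤ 1 * B.det := mul_le_mul_of_nonneg_right hdetC hdetB.le
    _ = B.det := one_mul _

lemma quad_diag_add_const {n : ℕ} (a : Fin n → ℝ) (t : ℝ) (x : Fin n → ℝ) :
    x ⬝ᵥ (Matrix.of fun i j : Fin n => (if i = j then a i else 0) + t) *ᵥ x
      = (∑ i, a i * x i ^ 2) + t * (∑ i, x i) ^ 2 := by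
  simp only [dotProduct, Matrix.mulVec, Matrix.of_apply, dotProduct, add_mul, ite_mul,
    zero_mul, Finset.sum_add_distrib, Finset.sum_ite_eq, Finset.mem_univ, if_true, mul_add,
    Finset.mul_sum]
  rw [sq (∑ i, x i), Finset.sum_mul_sum, Finset.mul_sum]
  congr 1
  · exact Finset.sum_congr rfl fun i _ => by ring
  · refine Finset.sum_congr rfl fun i _ => ?_
    rw [Finset.mul_sum]
    exact Finset.sum_congr rfl fun j _ => by ring

lemma det_diag_add_const {n : ℕ} (a : Fin n → ℝ) (ha : ∀ i, a i ≠ 0) (t : ℝ) :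
    (Matrix.of fun i j : Fin n => (if i = j then a i else 0) + t).det
      = (∏ i, a i) * (1 + t * ∑ i, (a i)⁻¹) := by
  have hM : (Matrix.of fun i j : Fin n => (if i = j then a i else 0) + t)
      = Matrix.diagonal a *
        (1 + Matrix.replicateCol (Fin 1) (fun i => (a i)⁻¹ * t) * Matrix.replicateRow (Fin 1) (fun _ => (1:ℝ))) := by
    ext i j
    rcases eq_or_ne i j with h | h <;>
      simp [Matrix.mul_apply, Matrix.diagonal, Matrix.one_apply, Matrix.replicateCol, Matrix.replicateRow, h,
        mul_add, Finset.sum_add_distrib, ite_mul, mul_ite, Finset.sum_ite_eq,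
        Finset.sum_ite_eq', ← mul_assoc, mul_inv_cancel₀ (ha i), mul_inv_cancel₀ (ha j)]
  rw [hM, det_mul, det_diagonal]
  erw [det_one_add_replicateCol_mul_replicateRow (ι := Fin 1)]
  congr 1
  simp [dotProduct, Finset.mul_sum, mul_comm]


/-! ### Analytic auxiliary lemmas -/

/-- Pointwise Cauchy–Schwarz: `(∑ c q)² / (∑ w q) ≤ ∑ c²/w · q`. -/
lemma cs_pointwise {k : ℕ} (c q w : Fin k → ℝ) (hw : ∀ ℓ, 0 < w ℓ) (hq : ∀ ℓ, 0 ≤ q ℓ) :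
    (∑ ℓ, c ℓ * q ℓ) ^ 2 / (∑ ℓ, w ℓ * q ℓ) ≤ ∑ ℓ, c ℓ ^ 2 / w ℓ * q ℓ := by
  have hg0 : 0 ≤ ∑ ℓ, w ℓ * q ℓ :=
    Finset.sum_nonneg fun ℓ _ => mul_nonneg (hw ℓ).le (hq ℓ)
  have hrhs : 0 ≤ ∑ ℓ, c ℓ ^ 2 / w ℓ * q ℓ :=
    Finset.sum_nonneg fun ℓ _ => mul_nonneg (div_nonneg (sq_nonneg _) (hw ℓ).le) (hq ℓ)
  rcases hg0.eq_or_lt with h0 | hpos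
  · have hq0 : ∀ ℓ ∈ Finset.univ, w ℓ * q ℓ = 0 :=
      (Finset.sum_eq_zero_iff_of_nonneg
        (fun ℓ _ => mul_nonneg (hw ℓ).le (hq ℓ))).mp h0.symm
    have hqz : ∀ ℓ : Fin k, q ℓ = 0 := fun ℓ => by
      rcases mul_eq_zero.mp (hq0 ℓ (Finset.mem_univ ℓ)) with h | h
      · exact absurd h (hw ℓ).ne'
      · exact h
    have hnum : (∑ ℓ, c ℓ * q ℓ) = 0 := by simp [hqz]
    rw [hnum]
    simpa using hrhs
  · rw [div_le_iff₀ hpos]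
    have key := Finset.sum_mul_sq_le_sq_mul_sq Finset.univ
        (fun ℓ => c ℓ * Real.sqrt (q ℓ) * (Real.sqrt (w ℓ))⁻¹)
        (fun ℓ => Real.sqrt (w ℓ) * Real.sqrt (q ℓ))
    have e1 : ∀ ℓ : Fin k, (c ℓ * Real.sqrt (q ℓ) * (Real.sqrt (w ℓ))⁻¹) *
        (Real.sqrt (w ℓ) * Real.sqrt (q ℓ)) = c ℓ * q ℓ := fun ℓ => by
      have hsw : Real.sqrt (w ℓ) ≠ 0 := by
        simp [Real.sqrt_ne_zero' ]
        exact hw ℓ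
      have h1 : Real.sqrt (q ℓ) * Real.sqrt (q ℓ) = q ℓ := Real.mul_self_sqrt (hq ℓ)
      have h2 : (Real.sqrt (w ℓ))⁻¹ * Real.sqrt (w ℓ) = 1 := inv_mul_cancel₀ hsw
      calc c ℓ * Real.sqrt (q ℓ) * (Real.sqrt (w ℓ))⁻¹ *
            (Real.sqrt (w ℓ) * Real.sqrt (q ℓ))
          = c ℓ * (Real.sqrt (q ℓ) * Real.sqrt (q ℓ)) *
            ((Real.sqrt (w ℓ))⁻¹ * Real.sqrt (w ℓ)) := by ring
        _ = c ℓ * q ℓ := by rw [h1, h2, mul_one]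
    have e2 : ∀ ℓ : Fin k, (c ℓ * Real.sqrt (q ℓ) * (Real.sqrt (w ℓ))⁻¹) ^ 2
        = c ℓ ^ 2 / w ℓ * q ℓ := fun ℓ => by
      have h1 : Real.sqrt (q ℓ) * Real.sqrt (q ℓ) = q ℓ := Real.mul_self_sqrt (hq ℓ)
      have h2 : Real.sqrt (w ℓ) * Real.sqrt (w ℓ) = w ℓ := Real.mul_self_sqrt (hw ℓ).le
      calc (c ℓ * Real.sqrt (q ℓ) * (Real.sqrt (w ℓ))⁻¹) ^ 2
          = c ℓ ^ 2 * (Real.sqrt (q ℓ) * Real.sqrt (q ℓ)) *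
            (Real.sqrt (w ℓ) * Real.sqrt (w ℓ))⁻¹ := by ring
        _ = c ℓ ^ 2 / w ℓ * q ℓ := by rw [h1, h2]; ring
    have e3 : ∀ ℓ : Fin k, (Real.sqrt (w ℓ) * Real.sqrt (q ℓ)) ^ 2 = w ℓ * q ℓ := fun ℓ => by
      have h1 : Real.sqrt (q ℓ) * Real.sqrt (q ℓ) = q ℓ := Real.mul_self_sqrt (hq ℓ)
      have h2 : Real.sqrt (w ℓ) * Real.sqrt (w ℓ) = w ℓ := Real.mul_self_sqrt (hw ℓ).le
      calc (Real.sqrt (w ℓ) * Real.sqrt (q ℓ)) ^ 2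
          = (Real.sqrt (w ℓ) * Real.sqrt (w ℓ)) * (Real.sqrt (q ℓ) * Real.sqrt (q ℓ)) := by
            ring
        _ = w ℓ * q ℓ := by rw [h1, h2]
    rw [Finset.sum_congr rfl fun ℓ _ => e1 ℓ, Finset.sum_congr rfl fun ℓ _ => e2 ℓ,
      Finset.sum_congr rfl fun ℓ _ => e3 ℓ] at key
    exact key

/-- Two-index special case of Cauchy–Schwarz. -/
lemma cs_two {k : ℕ} (q w : Fin k → ℝ) (hw : ∀ ℓ, 0 < w ℓ) (hq : ∀ ℓ, 0 ≤ q ℓ)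
    {i i' : Fin k} (hne : i ≠ i') :
    (q i - q i') ^ 2 / (∑ ℓ, w ℓ * q ℓ) ≤ q i / w i + q i' / w i' := by
  set c : Fin k → ℝ := fun ℓ => (if ℓ = i then 1 else 0) - (if ℓ = i' then 1 else 0) with hc
  have h1 : (∑ ℓ, c ℓ * q ℓ) = q i - q i' := by
    simp only [hc, sub_mul, ite_mul, one_mul, zero_mul, Finset.sum_sub_distrib,
      Finset.sum_ite_eq', Finset.mem_univ, if_true]
  have h2 : (∑ ℓ, c ℓ ^ 2 / w ℓ * q ℓ) = q i / w i + q i' / w i' := by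
    have hterm : ∀ ℓ : Fin k, c ℓ ^ 2 / w ℓ * q ℓ
        = (if ℓ = i then q ℓ / w ℓ else 0) + (if ℓ = i' then q ℓ / w ℓ else 0) := by
      intro ℓ
      rcases eq_or_ne ℓ i with h | h <;> rcases eq_or_ne ℓ i' with h' | h'
      · exact absurd (h ▸ h') (h ▸ hne)
      · simp [hc, h, h', hne]; ring
      · simp [hc, h, h', Ne.symm hne]; ring
      · simp [hc, h, h']
    rw [Finset.sum_congr rfl fun ℓ _ => hterm ℓ, Finset.sum_add_distrib]
    simp [Finset.sum_ite_eq']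
  calc (q i - q i') ^ 2 / (∑ ℓ, w ℓ * q ℓ)
      = (∑ ℓ, c ℓ * q ℓ) ^ 2 / (∑ ℓ, w ℓ * q ℓ) := by rw [h1]
    _ ≤ ∑ ℓ, c ℓ ^ 2 / w ℓ * q ℓ := cs_pointwise c q w hw hq
    _ = q i / w i + q i' / w i' := h2

lemma abs_mul_div_le (a b G : ℝ) (hG : 0 ≤ G) :
    |a * b / G| ≤ (a ^ 2 / G + b ^ 2 / G) / 2 := by
  rcases hG.eq_or_lt with h | h
  · simp [← h]
  · have h2 : |a * b| ≤ (a ^ 2 + b ^ 2) / 2 := by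
      rw [abs_mul]
      nlinarith [sq_nonneg (|a| - |b|), sq_abs a, sq_abs b]
    rw [abs_div, abs_of_pos h]
    calc |a * b| / G ≤ ((a ^ 2 + b ^ 2) / 2) / G := (div_le_div_iff_of_pos_right h).mpr h2
      _ = (a ^ 2 / G + b ^ 2 / G) / 2 := by ring

end WFAux

open WFAux Matrix

/-- for a mixture of `m + 2 ≥ 2` measurable probability densities and
`p` in the open simplex, `det M(p) ≤ (p₀ ⋯ p_{k-1})⁻¹`, hence
`√(det M(p)) ≤ ∏ ℓ pℓ^{-1/2}`, the unnormalized Dirichlet `𝒟(1/2,…,1/2)` density. -/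
theorem weightFisher_det_le_dirichlet (m : ℕ) (f : Fin (m + 2) → ℝ → ℝ)
    (hmeas : ∀ ℓ, Measurable (f ℓ)) (hnonneg : ∀ ℓ x, 0 ≤ f ℓ x)
    (hpdf : ∀ ℓ, ∫ x : ℝ, f ℓ x = 1)
    (p : Fin (m + 2) → ℝ) (hp : ∀ ℓ, 0 < p ℓ ∧ p ℓ < 1) (hsum : ∑ ℓ, p ℓ = 1) :
    (weightFisher f p).det ≤ (∏ ℓ, p ℓ)⁻¹ ∧
      Real.sqrt (weightFisher f p).det ≤ ∏ ℓ, p ℓ ^ (-(1 : ℝ) / 2) := by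
  classical
  have hpl : ∀ ℓ, 0 < p ℓ := fun ℓ => (hp ℓ).1
  -- the mixture density and difference functions
  set g : ℝ → ℝ := mixDens f p with hgdef
  have hgx : ∀ x, g x = ∑ ℓ, p ℓ * f ℓ x := fun x => rfl
  have hgnonneg : ∀ x, 0 ≤ g x := fun x =>
    Finset.sum_nonneg fun ℓ _ => mul_nonneg (hpl ℓ).le (hnonneg ℓ x)
  have hgmeas : Measurable g := by
    show Measurable fun x => ∑ ℓ, p ℓ * f ℓ x
    exact Finset.measurable_sum _ fun ℓ _ => (measurable_const.mul (hmeas ℓ))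
  have hfint : ∀ ℓ, Integrable (f ℓ) := fun ℓ => by
    by_contra h
    have := hpdf ℓ
    rw [integral_undef h] at this
    exact one_ne_zero this.symm
  set lst : Fin (m + 2) := Fin.last (m + 1) with hlst
  set q : Fin (m + 1) → ℝ → ℝ := fun j x => f j.castSucc x - f lst x with hqdef
  set E : Fin (m + 1) → Fin (m + 1) → ℝ → ℝ :=
    fun j h x => q j x * q h x / g x with hEdef
  have hMentry : ∀ j h, weightFisher f p j h = ∫ x, E j h x := fun j h => rfl
  have hcsne : ∀ j : Fin (m + 1), j.castSucc ≠ lst := fun j => (Fin.castSucc_lt_last j).ne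
  -- bound on squared differences
  set B : Fin (m + 1) → ℝ → ℝ :=
    fun j x => f j.castSucc x / p j.castSucc + f lst x / p lst with hBdef
  have hq2 : ∀ j x, q j x ^ 2 / g x ≤ B j x := by
    intro j x
    rw [hgx]
    exact cs_two (fun ℓ => f ℓ x) p hpl (fun ℓ => hnonneg ℓ x) (hcsne j)
  have hBnonneg : ∀ j x, 0 ≤ B j x := fun j x =>
    add_nonneg (div_nonneg (hnonneg _ x) (hpl _).le) (div_nonneg (hnonneg _ x) (hpl _).le)
  have hBint : ∀ j, Integrable (B j) := fun j =>
    ((hfint _).div_const _).add ((hfint _).div_const _)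
  have hEmeas : ∀ j h, AEStronglyMeasurable (E j h) volume := fun j h =>
    ((((hmeas _).sub (hmeas _)).mul ((hmeas _).sub (hmeas _))).div hgmeas).aestronglyMeasurable
  have hEint : ∀ j h, Integrable (E j h) := by
    intro j h
    refine Integrable.mono' (((hBint j).add (hBint h)).div_const 2) (hEmeas j h)
      (Filter.Eventually.of_forall fun x => ?_)
    have h1 : ‖E j h x‖ ≤ (q j x ^ 2 / g x + q h x ^ 2 / g x) / 2 :=
      abs_mul_div_le _ _ _ (hgnonneg x)
    refine h1.trans ?_
    have := hq2 j x
    have := hq2 h x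
    simp only [Pi.add_apply, Pi.div_apply]
    linarith
  -- the quadratic form of the Fisher matrix
  have hptEq : ∀ (v : Fin (m + 1) → ℝ) (x : ℝ),
      (∑ j, ∑ h, (v j * v h) * E j h x) = (∑ j, v j * q j x) ^ 2 / g x := by
    intro v x
    rw [sq, Finset.sum_mul_sum, Finset.sum_div]
    refine Finset.sum_congr rfl fun j _ => ?_
    rw [Finset.sum_div]
    refine Finset.sum_congr rfl fun h _ => ?_
    show v j * v h * (q j x * q h x / g x) = _
    ring
  have hquadM : ∀ v : Fin (m + 1) → ℝ,
      v ⬝ᵥ (weightFisher f p) *ᵥ v = ∫ x, (∑ j, v j * q j x) ^ 2 / g x := by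
    intro v
    have h1 : v ⬝ᵥ (weightFisher f p) *ᵥ v = ∑ j, ∑ h, ∫ x, (v j * v h) * E j h x := by
      simp only [dotProduct, Matrix.mulVec, dotProduct]
      refine Finset.sum_congr rfl fun j _ => ?_
      rw [Finset.mul_sum]
      refine Finset.sum_congr rfl fun h _ => ?_
      rw [integral_const_mul, hMentry j h]
      ring
    have hInner : ∀ j, Integrable (fun x => ∑ h, (v j * v h) * E j h x) :=
      fun j => integrable_finset_sum _ fun h _ => (hEint j h).const_mul _
    have h2 : (∫ x, ∑ j, ∑ h, (v j * v h) * E j h x)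
        = ∑ j, ∑ h, ∫ x, (v j * v h) * E j h x := by
      rw [integral_finset_sum _ fun j _ => hInner j]
      exact Finset.sum_congr rfl fun j _ =>
        integral_finset_sum _ fun h _ => (hEint j h).const_mul _
    rw [h1, ← h2]
    exact congrArg _ (funext fun x => hptEq v x)
  have hSint : ∀ v : Fin (m + 1) → ℝ,
      Integrable (fun x => (∑ j, v j * q j x) ^ 2 / g x) := by
    intro v
    have : (fun x => (∑ j, v j * q j x) ^ 2 / g x)
        = fun x => ∑ j, ∑ h, (v j * v h) * E j h x := funext fun x => (hptEq v x).symm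
    rw [this]
    exact integrable_finset_sum _ fun j _ =>
      integrable_finset_sum _ fun h _ => (hEint j h).const_mul _
  -- comparison matrix D
  set D : Matrix (Fin (m + 1)) (Fin (m + 1)) ℝ :=
    Matrix.of fun j h => (if j = h then (p j.castSucc)⁻¹ else 0) + (p lst)⁻¹ with hDdef
  have hquadD : ∀ v : Fin (m + 1) → ℝ,
      v ⬝ᵥ D *ᵥ v = (∑ j, (p j.castSucc)⁻¹ * v j ^ 2) + (p lst)⁻¹ * (∑ j, v j) ^ 2 :=
    fun v => quad_diag_add_const (fun j => (p j.castSucc)⁻¹) ((p lst)⁻¹) v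
  -- the key quadratic-form inequality `vᵀ M v ≤ vᵀ D v`
  have hquad_le : ∀ v : Fin (m + 1) → ℝ,
      v ⬝ᵥ (weightFisher f p) *ᵥ v ≤ v ⬝ᵥ D *ᵥ v := by
    intro v
    set c : Fin (m + 2) → ℝ := Fin.snoc v (-(∑ j, v j)) with hcv
    have hcterm : ∀ x, (∑ ℓ, c ℓ * f ℓ x) = ∑ j, v j * q j x := by
      intro x
      rw [Fin.sum_univ_castSucc]
      simp only [hcv, Fin.snoc_castSucc, Fin.snoc_last]
      have : ∀ j : Fin (m + 1), v j * q j x = v j * f j.castSucc x - v j * f lst x :=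
        fun j => by rw [hqdef]; ring
      rw [Finset.sum_congr rfl fun j _ => this j, Finset.sum_sub_distrib, ← Finset.sum_mul]
      ring
    have hTle : ∀ x, (∑ j, v j * q j x) ^ 2 / g x ≤ ∑ ℓ, c ℓ ^ 2 / p ℓ * f ℓ x := by
      intro x
      rw [← hcterm x, hgx]
      exact cs_pointwise c (fun ℓ => f ℓ x) p hpl (fun ℓ => hnonneg ℓ x)
    have hTint : Integrable (fun x => ∑ ℓ, c ℓ ^ 2 / p ℓ * f ℓ x) :=
      integrable_finset_sum _ fun ℓ _ => (hfint ℓ).const_mul _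
    have hTval : (∫ x, ∑ ℓ, c ℓ ^ 2 / p ℓ * f ℓ x) = ∑ ℓ, c ℓ ^ 2 / p ℓ := by
      rw [integral_finset_sum _ fun ℓ _ => (hfint ℓ).const_mul _]
      exact Finset.sum_congr rfl fun ℓ _ => by rw [integral_const_mul, hpdf ℓ, mul_one]
    have hMv : v ⬝ᵥ (weightFisher f p) *ᵥ v ≤ ∑ ℓ, c ℓ ^ 2 / p ℓ := by
      rw [hquadM v, ← hTval]
      exact integral_mono (hSint v) hTint fun x => hTle x
    refine hMv.trans ?_
    rw [hquadD v]
    have hcsum : (∑ ℓ, c ℓ ^ 2 / p ℓ)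
        = (∑ j, v j ^ 2 / p j.castSucc) + (∑ j, v j) ^ 2 / p lst := by
      rw [Fin.sum_univ_castSucc]
      simp only [hcv, Fin.snoc_castSucc, Fin.snoc_last, neg_sq]
      rfl
    rw [hcsum]
    have e1 : (∑ j, v j ^ 2 / p j.castSucc) = ∑ j, (p j.castSucc)⁻¹ * v j ^ 2 :=
      Finset.sum_congr rfl fun j _ => by ring
    rw [e1, div_eq_inv_mul]
  -- positivity properties
  have hMherm : (weightFisher f p).IsHermitian := by
    show (weightFisher f p)ᴴ = weightFisher f p
    ext j h
    simp only [Matrix.conjTranspose_apply, star_trivial]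
    show weightFisher f p h j = weightFisher f p j h
    unfold weightFisher
    exact congrArg _ (funext fun x => by ring)
  have hMpsd : (weightFisher f p).PosSemidef := by
    refine PosSemidef.of_dotProduct_mulVec_nonneg hMherm fun v => ?_
    rw [star_trivial, hquadM v]
    exact integral_nonneg fun x => div_nonneg (sq_nonneg _) (hgnonneg x)
  have hDherm : D.IsHermitian := by
    show Dᴴ = D
    ext j h
    simp only [Matrix.conjTranspose_apply, star_trivial, hDdef, Matrix.of_apply]
    rcases eq_or_ne j h with hjh | hjh
    · rw [hjh]
    · simp [hjh, Ne.symm hjh]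
  have hDpd : D.PosDef := by
    refine PosDef.of_dotProduct_mulVec_pos hDherm fun v hv => ?_
    rw [star_trivial, hquadD v]
    have h1 : 0 < ∑ j, (p j.castSucc)⁻¹ * v j ^ 2 := by
      rcases Function.ne_iff.mp hv with ⟨i, hi⟩
      refine Finset.sum_pos' (fun j _ => mul_nonneg (inv_nonneg.mpr (hpl _).le) (sq_nonneg _))
        ⟨i, Finset.mem_univ i, ?_⟩
      refine mul_pos (inv_pos.mpr (hpl _)) ?_
      rcases hi.lt_or_gt with h | h <;> simp only [Pi.zero_apply] at h <;> nlinarith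
    have h2 : 0 ≤ (p lst)⁻¹ * (∑ j, v j) ^ 2 :=
      mul_nonneg (inv_nonneg.mpr (hpl _).le) (sq_nonneg _)
    linarith
  have hDMpsd : (D - weightFisher f p).PosSemidef := by
    refine PosSemidef.of_dotProduct_mulVec_nonneg (hDherm.sub hMherm) fun v => ?_
    rw [star_trivial, Matrix.sub_mulVec, dotProduct_sub]
    have := hquad_le v
    linarith
  -- determinant of D
  have hplast : p lst ≠ 0 := (hpl lst).ne'
  have hsum' : (∑ j : Fin (m + 1), p j.castSucc) = 1 - p lst := by
    rw [eq_sub_iff_add_eq, ← Fin.sum_univ_castSucc]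
    exact hsum
  have hdetD : D.det = (∏ ℓ, p ℓ)⁻¹ := by
    rw [hDdef, det_diag_add_const (fun j => (p j.castSucc)⁻¹)
      (fun j => inv_ne_zero (hpl _).ne') ((p lst)⁻¹)]
    have e1 : (∑ j : Fin (m + 1), ((p j.castSucc)⁻¹)⁻¹) = 1 - p lst := by
      rw [← hsum']
      exact Finset.sum_congr rfl fun j _ => inv_inv _
    rw [e1]
    have e2 : (1 : ℝ) + (p lst)⁻¹ * (1 - p lst) = (p lst)⁻¹ := by
      field_simp
      ring
    rw [e2, ← Finset.prod_inv_distrib, ← Fin.prod_univ_castSucc (fun ℓ => (p ℓ)⁻¹)]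
  -- conclusion
  have hdet : (weightFisher f p).det ≤ (∏ ℓ, p ℓ)⁻¹ := by
    rw [← hdetD]
    exact det_le_det_of_psd_le hMpsd hDpd hDMpsd
  refine ⟨hdet, ?_⟩
  have hprodpos : (0 : ℝ) < ∏ ℓ, p ℓ := Finset.prod_pos fun ℓ _ => hpl ℓ
  have hstep : Real.sqrt ((∏ ℓ, p ℓ)⁻¹) = ∏ ℓ, p ℓ ^ (-(1 : ℝ) / 2) := by
    have hhalf : (-(1 : ℝ) / 2) = -(1 / 2 : ℝ) := by norm_num
    have e3 : ∀ ℓ : Fin (m + 2), p ℓ ^ (-(1 : ℝ) / 2) = (p ℓ ^ ((1 : ℝ) / 2))⁻¹ := fun ℓ => by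
      rw [hhalf, Real.rpow_neg (hpl ℓ).le]
    calc Real.sqrt ((∏ ℓ, p ℓ)⁻¹) = (Real.sqrt (∏ ℓ, p ℓ))⁻¹ := Real.sqrt_inv _
      _ = ((∏ ℓ, p ℓ) ^ ((1 : ℝ) / 2))⁻¹ := by rw [Real.sqrt_eq_rpow]
      _ = (∏ ℓ, p ℓ ^ ((1 : ℝ) / 2))⁻¹ := by
            rw [Real.finset_prod_rpow _ _ (fun ℓ _ => (hpl ℓ).le) _]
      _ = ∏ ℓ, (p ℓ ^ ((1 : ℝ) / 2))⁻¹ := by rw [Finset.prod_inv_distrib]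
      _ = ∏ ℓ, p ℓ ^ (-(1 : ℝ) / 2) := Finset.prod_congr rfl fun ℓ _ => (e3 ℓ).symm
  rw [← hstep]
  exact Real.sqrt_le_sqrt hdet
end
end

section
/- Let f₁ and f₂ be measurable probability density functions on ℝ and let p ∈ (0,1). Then the one-dimensional Fisher information for the weight of the two-component mixture, I(p) = ∫_ℝ (f₁(x) − f₂(x))² / (p f₁(x) + (1−p) f₂(x)) dx (integrand taken 0 where the denominator vanishes), satisfies I(p) ≤ 1/(p(1−p)). -/
open MeasureTheory

noncomputable section

/-- Fisher information for the weight `p` of the two-component mixture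
`p f₁ + (1-p) f₂`, the integrand being zero where the mixture density vanishes. -/
def weightFisher2 (f₁ f₂ : ℝ → ℝ) (p : ℝ) : ℝ :=
  ∫ x : ℝ, (f₁ x - f₂ x) ^ 2 / (p * f₁ x + (1 - p) * f₂ x)

/-- for measurable probability densities `f₁, f₂` on `ℝ` and
`p ∈ (0,1)`, the Fisher information for the mixture weight satisfies
`I(p) ≤ 1 / (p (1 - p))`. -/
theorem weightFisher2_le (f₁ f₂ : ℝ → ℝ)
    (hmeas₁ : Measurable f₁) (hmeas₂ : Measurable f₂)
    (hnonneg₁ : ∀ x, 0 ≤ f₁ x) (hnonneg₂ : ∀ x, 0 ≤ f₂ x)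
    (hpdf₁ : ∫ x : ℝ, f₁ x = 1) (hpdf₂ : ∫ x : ℝ, f₂ x = 1)
    (p : ℝ) (hp : p ∈ Set.Ioo (0 : ℝ) 1) :
    weightFisher2 f₁ f₂ p ≤ 1 / (p * (1 - p)) := by
  obtain ⟨hp0, hp1⟩ := hp
  have hp1' : (0:ℝ) < 1 - p := by linarith
  have hint₁ : Integrable f₁ := by
    by_contra h
    rw [integral_undef h] at hpdf₁
    norm_num at hpdf₁
  have hint₂ : Integrable f₂ := by
    by_contra h
    rw [integral_undef h] at hpdf₂
    norm_num at hpdf₂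
  have hg : Integrable (fun x => f₁ x / p + f₂ x / (1 - p)) :=
    (hint₁.div_const p).add (hint₂.div_const (1 - p))
  have hmono : ∀ x, (f₁ x - f₂ x) ^ 2 / (p * f₁ x + (1 - p) * f₂ x) ≤
      f₁ x / p + f₂ x / (1 - p) := by
    intro x
    set a := f₁ x with ha'
    set b := f₂ x with hb'
    have ha : 0 ≤ a := hnonneg₁ x
    have hb : 0 ≤ b := hnonneg₂ x
    rcases eq_or_lt_of_le (by positivity : (0:ℝ) ≤ p * a + (1 - p) * b) with hm | hm
    · have ha0 : a = 0 := by nlinarith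
      have hb0 : b = 0 := by nlinarith
      simp [ha0, hb0]
    · rw [div_le_iff₀ hm]
      have h1 : a / p + b / (1 - p) = ((1 - p) * a + p * b) / (p * (1 - p)) := by
        field_simp
      rw [h1, div_mul_eq_mul_div, le_div_iff₀ (by positivity)]
      nlinarith [mul_nonneg ha hb]
  have key : weightFisher2 f₁ f₂ p ≤ ∫ x : ℝ, (f₁ x / p + f₂ x / (1 - p)) := by
    refine integral_mono_of_nonneg ?_ hg ?_
    · filter_upwards with x
      exact div_nonneg (sq_nonneg _) (by have := hnonneg₁ x; have := hnonneg₂ x; positivity)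
    · filter_upwards with x
      exact hmono x
  have heq : ∫ x : ℝ, (f₁ x / p + f₂ x / (1 - p)) = 1 / (p * (1 - p)) := by
    rw [integral_add (hint₁.div_const p) (hint₂.div_const (1 - p)),
        integral_div, integral_div, hpdf₁, hpdf₂]
    field_simp
    ring
  rw [heq] at key
  exact key
end
end

section
/- Let f₁ and f₂ be measurable probability density functions on ℝ. Then the Jeffreys prior for the weight of the two-component mixture, π^J(p) = √(I(p)), is proper, with ∫₀¹ √(I(p)) dp ≤ π (the constant pi), where I(p) = ∫_ℝ (f₁(x) − f₂(x))² / (p f₁(x) + (1−p) f₂(x)) dx. -/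
open MeasureTheory

noncomputable section

lemma arcsin_deriv {p : ℝ} (hp : p ∈ Set.Ioo (0:ℝ) 1) :
    HasDerivAt (fun q => Real.arcsin (2*q - 1)) ((Real.sqrt (p * (1 - p)))⁻¹) p := by
  obtain ⟨h0, h1⟩ := hp
  have h₁ : (2*p - 1 : ℝ) ≠ -1 := by intro h; nlinarith [h]
  have h₂ : (2*p - 1 : ℝ) ≠ 1 := by intro h; nlinarith [h]
  have hd := (Real.hasDerivAt_arcsin h₁ h₂).comp p
    ((hasDerivAt_id p).const_mul 2 |>.sub_const 1)
  have heq : 1 - (2*p - 1)^2 = 4 * (p * (1 - p)) := by ring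
  have hsq : Real.sqrt (1 - (2*p-1)^2) = 2 * Real.sqrt (p * (1-p)) := by
    rw [heq, show (4 : ℝ) * (p * (1-p)) = 2^2 * (p*(1-p)) by ring,
      Real.sqrt_mul (by positivity), Real.sqrt_sq (by norm_num)]
  have hpos : 0 < Real.sqrt (p * (1 - p)) := Real.sqrt_pos.2 (by nlinarith)
  refine hd.congr_deriv ?_
  rw [hsq]
  field_simp

lemma bound_integrable :
    IntegrableOn (fun p => (Real.sqrt (p * (1 - p)))⁻¹) (Set.Ioo (0:ℝ) 1) volume := by
  have hcont : ContinuousOn (fun q => Real.arcsin (2*q - 1)) (Set.Icc (0:ℝ) 1) :=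
    (Real.continuous_arcsin.comp (by continuity)).continuousOn
  have := intervalIntegral.integrableOn_deriv_of_nonneg (g := fun q => Real.arcsin (2*q - 1))
    (g' := fun p => (Real.sqrt (p * (1 - p)))⁻¹) (a := 0) (b := 1)
    hcont (fun x hx => arcsin_deriv hx) (fun x hx => by positivity)
  exact this.mono_set Set.Ioo_subset_Ioc_self

lemma bound_integral :
    ∫ p in Set.Ioo (0:ℝ) 1, (Real.sqrt (p * (1 - p)))⁻¹ = Real.pi := by
  have hcont : ContinuousOn (fun q => Real.arcsin (2*q - 1)) (Set.Icc (0:ℝ) 1) :=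
    (Real.continuous_arcsin.comp (by continuity)).continuousOn
  have hint : IntervalIntegrable (fun p => (Real.sqrt (p * (1 - p)))⁻¹) volume 0 1 := by
    rw [intervalIntegrable_iff_integrableOn_Ioc_of_le (by norm_num)]
    exact intervalIntegral.integrableOn_deriv_of_nonneg hcont (fun x hx => arcsin_deriv hx)
      (fun x hx => by positivity)
  have := intervalIntegral.integral_eq_sub_of_hasDerivAt_of_le (by norm_num : (0:ℝ) ≤ 1)
    hcont (fun x hx => arcsin_deriv hx) hint
  rw [← MeasureTheory.integral_Ioc_eq_integral_Ioo,
    ← intervalIntegral.integral_of_le (by norm_num : (0:ℝ) ≤ 1), this]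
  norm_num [Real.arcsin_one, Real.arcsin_neg_one]

/-- for measurable probability densities `f₁, f₂` on `ℝ`, the Jeffreys
prior `p ↦ √(I(p))` for the weight of the two-component mixture is proper, with
`∫₀¹ √(I(p)) dp ≤ π`. -/
theorem jeffreys_prior_weight2_proper (f₁ f₂ : ℝ → ℝ)
    (hmeas₁ : Measurable f₁) (hmeas₂ : Measurable f₂)
    (hnonneg₁ : ∀ x, 0 ≤ f₁ x) (hnonneg₂ : ∀ x, 0 ≤ f₂ x)
    (hpdf₁ : ∫ x : ℝ, f₁ x = 1) (hpdf₂ : ∫ x : ℝ, f₂ x = 1) :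
    IntegrableOn (fun p => Real.sqrt (weightFisher2 f₁ f₂ p)) (Set.Ioo (0 : ℝ) 1) volume ∧
      ∫ p in Set.Ioo (0 : ℝ) 1, Real.sqrt (weightFisher2 f₁ f₂ p) ≤ Real.pi := by
  have hInt₁ : Integrable f₁ := by
    by_contra h; rw [MeasureTheory.integral_undef h] at hpdf₁; norm_num at hpdf₁
  have hInt₂ : Integrable f₂ := by
    by_contra h; rw [MeasureTheory.integral_undef h] at hpdf₂; norm_num at hpdf₂
  have key : ∀ p ∈ Set.Ioo (0:ℝ) 1, weightFisher2 f₁ f₂ p ≤ 1/p + 1/(1-p) := by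
    intro p hp
    obtain ⟨h0, h1⟩ := hp
    have h1p : (0:ℝ) < 1 - p := by linarith
    have hb : ∀ x, (f₁ x - f₂ x) ^ 2 / (p * f₁ x + (1 - p) * f₂ x)
        ≤ f₁ x / p + f₂ x / (1 - p) := by
      intro x
      set a := f₁ x with ha'
      set b := f₂ x with hb'
      have ha := hnonneg₁ x
      have hbn := hnonneg₂ x
      rcases eq_or_lt_of_le (by positivity : (0:ℝ) ≤ p * a + (1 - p) * b) with hm | hm
      · have ha0 : a = 0 := by nlinarith
        have hb0 : b = 0 := by nlinarith
        simp [ha0, hb0]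
      · rw [div_le_iff₀ hm]
        have e1 : a / p * p = a := div_mul_cancel₀ a h0.ne'
        have e2 : b / (1 - p) * (1 - p) = b := div_mul_cancel₀ b h1p.ne'
        have n1 : 0 ≤ a / p := div_nonneg ha h0.le
        have n2 : 0 ≤ b / (1 - p) := div_nonneg hbn h1p.le
        nlinarith [mul_nonneg (mul_nonneg n1 hbn) h1p.le,
          mul_nonneg (mul_nonneg n2 ha) h0.le, mul_nonneg ha hbn]
    have hmeasInt : Measurable (fun x => (f₁ x - f₂ x) ^ 2 / (p * f₁ x + (1 - p) * f₂ x)) :=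
      ((hmeas₁.sub hmeas₂).pow_const 2).div
        ((hmeas₁.const_mul p).add (hmeas₂.const_mul (1 - p)))
    have hIntR : Integrable (fun x => f₁ x / p + f₂ x / (1 - p)) :=
      (hInt₁.div_const p).add (hInt₂.div_const (1 - p))
    have hIntL : Integrable (fun x => (f₁ x - f₂ x) ^ 2 / (p * f₁ x + (1 - p) * f₂ x)) := by
      refine hIntR.mono' hmeasInt.aestronglyMeasurable (ae_of_all _ fun x => ?_)
      rw [Real.norm_eq_abs, abs_of_nonneg (div_nonneg (sq_nonneg _) (add_nonneg (mul_nonneg h0.le (hnonneg₁ x)) (mul_nonneg h1p.le (hnonneg₂ x))))]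
      exact hb x
    unfold weightFisher2
    calc ∫ x, (f₁ x - f₂ x) ^ 2 / (p * f₁ x + (1 - p) * f₂ x)
        ≤ ∫ x, (f₁ x / p + f₂ x / (1 - p)) := integral_mono hIntL hIntR hb
      _ = 1/p + 1/(1-p) := by
          rw [integral_add (hInt₁.div_const p) (hInt₂.div_const (1 - p)),
            integral_div, integral_div, hpdf₁, hpdf₂]
  have hsqrt : ∀ p ∈ Set.Ioo (0:ℝ) 1,
      Real.sqrt (weightFisher2 f₁ f₂ p) ≤ (Real.sqrt (p * (1 - p)))⁻¹ := by
    intro p hp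
    obtain ⟨h0, h1⟩ := hp
    have h1p : (0:ℝ) < 1 - p := by linarith
    have he : 1/p + 1/(1-p) = (p * (1 - p))⁻¹ := by field_simp; ring
    calc Real.sqrt (weightFisher2 f₁ f₂ p) ≤ Real.sqrt (1/p + 1/(1-p)) :=
          Real.sqrt_le_sqrt (key p ⟨h0, h1⟩)
      _ = (Real.sqrt (p * (1 - p)))⁻¹ := by rw [he, Real.sqrt_inv]
  have hmeasI : Measurable (fun p => weightFisher2 f₁ f₂ p) := by
    have hF : Measurable (fun q : ℝ × ℝ =>
        (f₁ q.2 - f₂ q.2) ^ 2 / (q.1 * f₁ q.2 + (1 - q.1) * f₂ q.2)) := by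
      apply Measurable.div
      · exact ((hmeas₁.comp measurable_snd).sub (hmeas₂.comp measurable_snd)).pow_const 2
      · exact (measurable_fst.mul (hmeas₁.comp measurable_snd)).add
          ((measurable_const.sub measurable_fst).mul (hmeas₂.comp measurable_snd))
    exact hF.stronglyMeasurable.integral_prod_right'.measurable
  have hIntSqrt : IntegrableOn (fun p => Real.sqrt (weightFisher2 f₁ f₂ p))
      (Set.Ioo (0:ℝ) 1) volume := by
    refine bound_integrable.mono'
      ((Real.continuous_sqrt.measurable.comp hmeasI).aestronglyMeasurable) ?_
    refine (ae_restrict_iff' measurableSet_Ioo).2 (ae_of_all _ fun p hp => ?_)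
    rw [Real.norm_eq_abs, abs_of_nonneg (Real.sqrt_nonneg _)]
    exact hsqrt p hp
  refine ⟨hIntSqrt, ?_⟩
  calc ∫ p in Set.Ioo (0:ℝ) 1, Real.sqrt (weightFisher2 f₁ f₂ p)
      ≤ ∫ p in Set.Ioo (0:ℝ) 1, (Real.sqrt (p * (1 - p)))⁻¹ :=
        setIntegral_mono_on hIntSqrt bound_integrable measurableSet_Ioo hsqrt
    _ = Real.pi := bound_integral
end
end

section
/- Let f₁ and f₂ be measurable probability density functions on ℝ. Then the Fisher information for the weight of the two-component mixture, p ↦ I(p) = ∫_ℝ (f₁(x) − f₂(x))² / (p f₁(x) + (1−p) f₂(x)) dx, is a convex function of p on the open interval (0,1). -/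
open MeasureTheory

noncomputable section

lemma inv_convex_aux {a b U V : ℝ} (hU : 0 < U) (hV : 0 < V)
    (ha : 0 ≤ a) (hb : 0 ≤ b) (hab : a + b = 1) :
    (a * U + b * V)⁻¹ ≤ a * U⁻¹ + b * V⁻¹ := by
  have hW : 0 < a * U + b * V := by
    have h0 : min U V ≤ a * U + b * V := by
      nlinarith [min_le_left U V, min_le_right U V]
    exact lt_of_lt_of_le (lt_min hU hV) h0
  have h1 : a * U⁻¹ + b * V⁻¹ = (a * V + b * U) / (U * V) := by
    field_simp
  rw [h1, inv_eq_one_div, div_le_div_iff₀ hW (mul_pos hU hV)]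
  have hb' : b = 1 - a := by linarith
  subst hb'
  nlinarith [mul_nonneg (mul_nonneg ha hb) (sq_nonneg (U - V)), mul_pos hU hV]


/-- for measurable probability densities `f₁, f₂` on `ℝ`, the Fisher
information `p ↦ I(p)` for the weight of the two-component mixture is a convex
function of `p` on the open interval `(0,1)`. -/
theorem weightFisher2_convexOn (f₁ f₂ : ℝ → ℝ)
    (hmeas₁ : Measurable f₁) (hmeas₂ : Measurable f₂)
    (hnonneg₁ : ∀ x, 0 ≤ f₁ x) (hnonneg₂ : ∀ x, 0 ≤ f₂ x)
    (hpdf₁ : ∫ x : ℝ, f₁ x = 1) (hpdf₂ : ∫ x : ℝ, f₂ x = 1) :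
    ConvexOn ℝ (Set.Ioo (0 : ℝ) 1) (weightFisher2 f₁ f₂) := by
  have hint₁ : Integrable f₁ := by
    by_contra h
    rw [integral_undef h] at hpdf₁; norm_num at hpdf₁
  have hint₂ : Integrable f₂ := by
    by_contra h
    rw [integral_undef h] at hpdf₂; norm_num at hpdf₂
  set g : ℝ → ℝ → ℝ := fun t x => (f₁ x - f₂ x) ^ 2 / (t * f₁ x + (1 - t) * f₂ x)
    with hg
  have hmg : ∀ t : ℝ, Measurable (g t) := fun t =>
    ((hmeas₁.sub hmeas₂).pow_const 2).div
      ((measurable_const.mul hmeas₁).add (measurable_const.mul hmeas₂))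
  have hgnonneg : ∀ t ∈ Set.Ioo (0:ℝ) 1, ∀ x, 0 ≤ g t x := by
    intro t ht x
    apply div_nonneg (sq_nonneg _)
    have := hnonneg₁ x; have := hnonneg₂ x
    nlinarith [ht.1, ht.2]
  have hIg : ∀ t ∈ Set.Ioo (0:ℝ) 1, Integrable (g t) := by
    intro t ht
    have hc : 0 < min t (1 - t) := lt_min ht.1 (by linarith [ht.2])
    refine Integrable.mono' ((hint₁.add hint₂).div_const (min t (1 - t)))
      (hmg t).aestronglyMeasurable (Filter.Eventually.of_forall fun x => ?_)
    rw [Real.norm_eq_abs, abs_of_nonneg (hgnonneg t ht x)]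
    have hA := hnonneg₁ x; have hB := hnonneg₂ x
    rcases eq_or_lt_of_le (add_nonneg hA hB) with hAB | hAB
    · have h1 : f₁ x = 0 := by linarith [hnonneg₂ x]
      have h2 : f₂ x = 0 := by linarith [hnonneg₁ x]
      simp [hg, h1, h2]
    · have hD : 0 < t * f₁ x + (1 - t) * f₂ x := by
        rcases lt_or_ge 0 (f₁ x) with h | h
        · nlinarith [ht.1, ht.2]
        · have : f₁ x = 0 := le_antisymm h hA
          nlinarith [ht.2]
      have hDc : min t (1 - t) * (f₁ x + f₂ x) ≤ t * f₁ x + (1 - t) * f₂ x := by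
        have h1 : min t (1 - t) ≤ t := min_le_left _ _
        have h2 : min t (1 - t) ≤ 1 - t := min_le_right _ _
        nlinarith
      simp only [Pi.add_apply]
      rw [hg, div_le_div_iff₀ hD hc]
      nlinarith [mul_le_mul_of_nonneg_left hDc (le_of_lt hAB),
        mul_nonneg (mul_nonneg hc.le hA) hB]
  refine ⟨convex_Ioo 0 1, ?_⟩
  intro p hp q hq a b ha hb hab
  have hm : a • p + b • q ∈ Set.Ioo (0:ℝ) 1 := (convex_Ioo 0 1) hp hq ha hb hab
  simp only [smul_eq_mul] at hm ⊢
  show weightFisher2 f₁ f₂ (a * p + b * q) ≤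
      a * weightFisher2 f₁ f₂ p + b * weightFisher2 f₁ f₂ q
  unfold weightFisher2
  rw [← integral_const_mul, ← integral_const_mul,
    ← integral_add ((hIg p hp).const_mul a) ((hIg q hq).const_mul b)]
  refine integral_mono (hIg _ hm) (((hIg p hp).const_mul a).add ((hIg q hq).const_mul b)) ?_
  intro x
  have hA := hnonneg₁ x; have hB := hnonneg₂ x
  rcases eq_or_lt_of_le (add_nonneg hA hB) with hAB | hAB
  · have h1 : f₁ x = 0 := by linarith
    have h2 : f₂ x = 0 := by linarith
    simp [hg, h1, h2]
  · have hpos : ∀ t ∈ Set.Ioo (0:ℝ) 1, 0 < t * f₁ x + (1 - t) * f₂ x := by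
      intro t ht
      rcases lt_or_ge 0 (f₁ x) with h | h
      · nlinarith [ht.1, ht.2]
      · have : f₁ x = 0 := le_antisymm h hA
        nlinarith [ht.2]
    have hU := hpos p hp
    have hV := hpos q hq
    have hWeq : (a * p + b * q) * f₁ x + (1 - (a * p + b * q)) * f₂ x
        = a * (p * f₁ x + (1 - p) * f₂ x) + b * (q * f₁ x + (1 - q) * f₂ x) := by
      have : 1 - (a * p + b * q) = a * (1 - p) + b * (1 - q) := by
        rw [mul_sub, mul_sub]; linarith
      rw [this]; ring
    have key := inv_convex_aux hU hV ha hb hab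
    have hN : (0:ℝ) ≤ (f₁ x - f₂ x) ^ 2 := sq_nonneg _
    calc (f₁ x - f₂ x) ^ 2 / ((a * p + b * q) * f₁ x + (1 - (a * p + b * q)) * f₂ x)
        = (f₁ x - f₂ x) ^ 2 * (a * (p * f₁ x + (1 - p) * f₂ x) + b * (q * f₁ x + (1 - q) * f₂ x))⁻¹ := by
          rw [hWeq, div_eq_mul_inv]
      _ ≤ (f₁ x - f₂ x) ^ 2 * (a * (p * f₁ x + (1 - p) * f₂ x)⁻¹ + b * (q * f₁ x + (1 - q) * f₂ x)⁻¹) :=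
          mul_le_mul_of_nonneg_left key hN
      _ = a * ((f₁ x - f₂ x) ^ 2 / (p * f₁ x + (1 - p) * f₂ x))
          + b * ((f₁ x - f₂ x) ^ 2 / (q * f₁ x + (1 - q) * f₂ x)) := by
          rw [div_eq_mul_inv, div_eq_mul_inv]; ring
end
end

section
/- Fix k ≥ 2, weights p₁, …, p_k > 0 with Σ_ℓ p_ℓ = 1, and standard deviations σ₁, …, σ_k > 0. Then the Jeffreys prior on the means of the Gaussian mixture, π^J(μ) = √(det I(μ)), satisfies: ∫_{ℝ^k} √(det I(μ)) dμ ∈ {0, +∞}. In particular, the Jeffreys prior for the means is improper: it can never be normalized into a probability density on ℝ^k. -/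
open MeasureTheory

noncomputable section

/-- Density of a centered Gaussian with standard deviation `σ`. -/
def gaussPdf (σ x : ℝ) : ℝ :=
  (Real.sqrt (2 * Real.pi * σ ^ 2))⁻¹ * Real.exp (-(x ^ 2) / (2 * σ ^ 2))

/-- Gaussian mixture density `g(x; μ) = ∑ ℓ pℓ φ_{σℓ}(x - μℓ)`. -/
def gaussMix {k : ℕ} (p σ μ : Fin k → ℝ) (x : ℝ) : ℝ :=
  ∑ ℓ, p ℓ * gaussPdf (σ ℓ) (x - μ ℓ)

/-- Mean Fisher matrix of the Gaussian mixture with fixed weights `p` and scales `σ`. -/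
def meanFisher {k : ℕ} (p σ μ : Fin k → ℝ) : Matrix (Fin k) (Fin k) ℝ := fun j h =>
  p j * p h / (σ j ^ 2 * σ h ^ 2) *
    ∫ x : ℝ,
      (x - μ j) * (x - μ h) * gaussPdf (σ j) (x - μ j) * gaussPdf (σ h) (x - μ h) /
        gaussMix p σ μ x

lemma gaussMix_shift {k : ℕ} (p σ μ : Fin k → ℝ) (t x : ℝ) :
    gaussMix p σ (fun i => μ i + t) (x + t) = gaussMix p σ μ x := by
  unfold gaussMix
  refine Finset.sum_congr rfl fun ℓ _ => ?_
  have : x + t - (μ ℓ + t) = x - μ ℓ := by ring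
  rw [this]

lemma meanFisher_shift {k : ℕ} (p σ μ : Fin k → ℝ) (t : ℝ) :
    meanFisher p σ (fun i => μ i + t) = meanFisher p σ μ := by
  funext j h
  unfold meanFisher
  congr 1
  calc
    (∫ x : ℝ, (x - (μ j + t)) * (x - (μ h + t)) * gaussPdf (σ j) (x - (μ j + t)) *
          gaussPdf (σ h) (x - (μ h + t)) / gaussMix p σ (fun i => μ i + t) x)
      = ∫ x : ℝ, (x + t - (μ j + t)) * (x + t - (μ h + t)) *
          gaussPdf (σ j) (x + t - (μ j + t)) * gaussPdf (σ h) (x + t - (μ h + t)) /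
          gaussMix p σ (fun i => μ i + t) (x + t) :=
        (integral_add_right_eq_self (fun x : ℝ =>
          (x - (μ j + t)) * (x - (μ h + t)) * gaussPdf (σ j) (x - (μ j + t)) *
            gaussPdf (σ h) (x - (μ h + t)) / gaussMix p σ (fun i => μ i + t) x) t).symm
    _ = ∫ x : ℝ, (x - μ j) * (x - μ h) * gaussPdf (σ j) (x - μ j) *
          gaussPdf (σ h) (x - μ h) / gaussMix p σ μ x := by
        congr 1
        funext x
        have hj : x + t - (μ j + t) = x - μ j := by ring
        have hh : x + t - (μ h + t) = x - μ h := by ring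
        rw [hj, hh, gaussMix_shift]

/-- Translation invariance of the Lebesgue integral on `Fin k → ℝ`, for an arbitrary
`ℝ≥0∞`-valued function. -/
lemma lintegral_shift {k : ℕ} (G : (Fin k → ℝ) → ENNReal) (w : Fin k → ℝ) :
    (∫⁻ μ : Fin k → ℝ, G (μ + w)) = ∫⁻ μ : Fin k → ℝ, G μ := by
  have h := lintegral_map_equiv (μ := (volume : Measure (Fin k → ℝ))) G
    (MeasurableEquiv.addRight w)
  rw [MeasurableEquiv.coe_addRight, map_add_right_eq_self] at h
  exact h.symm

/-- for a Gaussian mixture with `k = m + 2 ≥ 2` components, fixed positive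
weights summing to one and fixed positive scales, the Jeffreys prior
`π^J(μ) = √(det I(μ))` on the means satisfies `∫_{ℝ^k} √(det I(μ)) dμ ∈ {0, +∞}`:
it can never be normalized into a probability density on `ℝ^k`. -/
theorem jeffreys_means_improper (m : ℕ) (p σ : Fin (m + 2) → ℝ)
    (hp : ∀ ℓ, 0 < p ℓ) (hsum : ∑ ℓ, p ℓ = 1) (hσ : ∀ ℓ, 0 < σ ℓ) :
    (∫⁻ μ : Fin (m + 2) → ℝ,
        ENNReal.ofReal (Real.sqrt (meanFisher p σ μ).det)) = 0 ∨
    (∫⁻ μ : Fin (m + 2) → ℝ,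
        ENNReal.ofReal (Real.sqrt (meanFisher p σ μ).det)) = ⊤ := by
  set F : (Fin (m + 2) → ℝ) → ENNReal :=
    fun μ => ENNReal.ofReal (Real.sqrt (meanFisher p σ μ).det) with hF
  -- slices according to the integer part of the first coordinate
  set S : ℤ → Set (Fin (m + 2) → ℝ) := fun n => {μ | (n : ℝ) ≤ μ 0 ∧ μ 0 < n + 1} with hS
  have hmeas : ∀ n : ℤ, MeasurableSet (S n) := by
    intro n
    have : S n = (fun μ : Fin (m + 2) → ℝ => μ 0) ⁻¹' Set.Ico (n : ℝ) (n + 1) := rfl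
    rw [this]
    exact (measurable_pi_apply 0) measurableSet_Ico
  have hdisj : Pairwise (Function.onFun Disjoint S) := by
    intro a b hab
    refine Set.disjoint_left.2 fun μ hμa hμb => hab ?_
    have ha : a = ⌊μ 0⌋ := (Int.floor_eq_iff.2 ⟨hμa.1, hμa.2⟩).symm
    have hb : b = ⌊μ 0⌋ := (Int.floor_eq_iff.2 ⟨hμb.1, hμb.2⟩).symm
    rw [ha, hb]
  have hunion : (⋃ n : ℤ, S n) = Set.univ := by
    refine Set.eq_univ_iff_forall.2 fun μ => Set.mem_iUnion.2 ⟨⌊μ 0⌋, ?_, ?_⟩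
    · exact Int.floor_le _
    · exact Int.lt_floor_add_one _
  -- invariance of F under diagonal integer translations
  have hFinv : ∀ (n : ℤ) (μ : Fin (m + 2) → ℝ),
      F (μ + fun _ => (n : ℝ)) = F μ := by
    intro n μ
    have hμ : (μ + fun _ => (n : ℝ)) = fun i => μ i + (n : ℝ) := by
      funext i; simp
    rw [hF]
    simp only [hμ, meanFisher_shift]
  -- each slice integral equals the slice-0 integral
  have hslice : ∀ n : ℤ, (∫⁻ μ in S n, F μ) = ∫⁻ μ in S 0, F μ := by
    intro n
    have hmem : ∀ μ : Fin (m + 2) → ℝ,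
        (μ + fun _ => (n : ℝ)) ∈ S n ↔ μ ∈ S 0 := by
      intro μ
      simp only [hS, Set.mem_setOf_eq, Pi.add_apply]
      constructor
      · rintro ⟨h1, h2⟩
        constructor
        · push_cast at h1 ⊢; linarith
        · push_cast at h2 ⊢; linarith
      · rintro ⟨h1, h2⟩
        constructor
        · push_cast at h1 ⊢; linarith
        · push_cast at h2 ⊢; linarith
    have hind : ∀ μ : Fin (m + 2) → ℝ,
        (S n).indicator F (μ + fun _ => (n : ℝ)) = (S 0).indicator F μ := by
      intro μ
      by_cases hμ : μ ∈ S 0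
      · rw [Set.indicator_of_mem ((hmem μ).2 hμ), Set.indicator_of_mem hμ, hFinv]
      · rw [Set.indicator_of_notMem (fun h => hμ ((hmem μ).1 h)),
          Set.indicator_of_notMem hμ]
    calc
      (∫⁻ μ in S n, F μ) = ∫⁻ μ, (S n).indicator F μ :=
        (lintegral_indicator (hmeas n) F).symm
      _ = ∫⁻ μ, (S n).indicator F (μ + fun _ => (n : ℝ)) :=
        (lintegral_shift ((S n).indicator F) (fun _ => (n : ℝ))).symm
      _ = ∫⁻ μ, (S 0).indicator F μ := by
        congr 1; funext μ; exact hind μ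
      _ = ∫⁻ μ in S 0, F μ := lintegral_indicator (hmeas 0) F
  have hsplit : (∫⁻ μ, F μ) = ∑' n : ℤ, ∫⁻ μ in S n, F μ := by
    conv_lhs => rw [← setLIntegral_univ F, ← hunion]
    exact lintegral_iUnion hmeas hdisj F
  rw [hsplit]
  simp_rw [hslice]
  by_cases hc : (∫⁻ μ in S 0, F μ) = 0
  · left; simp [hc]
  · right
    exact ENNReal.tsum_const_eq_top_of_ne_zero hc
end
end

section
/- Consider the reparametrized two-component Gaussian mixture density g(x; p, μ, τ, δ, σ) = p φ_τ(x − μ) + (1 − p) φ_{τσ}(x − μ − τδ), with parameter θ = (p, μ, τ, δ, σ) ∈ (0,1) × ℝ × (0,∞) × ℝ × (0,∞), and let I(θ) be its 5×5 Fisher information matrix with entries I_{ab}(θ) = ∫_ℝ (∂_a log g(x;θ))(∂_b log g(x;θ)) g(x;θ) dx (a, b ranging over the five parameters). Then det I(p, μ, τ, δ, σ) = τ^{−4} · det I(p, 0, 1, δ, σ). In particular the Jeffreys prior √(det I(θ)) is constant in the reference location μ and proportional to τ^{−2} in the reference scale τ, hence improper. -/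
open MeasureTheory
open scoped ENNReal

noncomputable section

/-- Reparametrized two-component Gaussian mixture density of Mengersen–Robert:
`g(x; p, μ, τ, δ, σ) = p φ_τ(x - μ) + (1 - p) φ_{τσ}(x - μ - τδ)`. -/
def repMix (p μ τ δ σ x : ℝ) : ℝ :=
  p * gaussPdf τ (x - μ) + (1 - p) * gaussPdf (τ * σ) (x - μ - τ * δ)

/-- Score function `∂_a log g(x; θ)` for `θ = (p, μ, τ, δ, σ)`. -/
def repScore (a : Fin 5) (p μ τ δ σ x : ℝ) : ℝ :=
  if a = 0 then deriv (fun t => Real.log (repMix t μ τ δ σ x)) p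
  else if a = 1 then deriv (fun t => Real.log (repMix p t τ δ σ x)) μ
  else if a = 2 then deriv (fun t => Real.log (repMix p μ t δ σ x)) τ
  else if a = 3 then deriv (fun t => Real.log (repMix p μ τ t σ x)) δ
  else deriv (fun t => Real.log (repMix p μ τ δ t x)) σ

/-- The `5 × 5` Fisher information matrix of the reparametrized mixture, with
entries `I_{ab}(θ) = ∫ (∂_a log g)(∂_b log g) g dx`. -/
def repFisher (p μ τ δ σ : ℝ) : Matrix (Fin 5) (Fin 5) ℝ := fun a b =>
  ∫ x : ℝ, repScore a p μ τ δ σ x * repScore b p μ τ δ σ x * repMix p μ τ δ σ x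

lemma gaussPdf_nonneg (s x : ℝ) : 0 ≤ gaussPdf s x := by
  unfold gaussPdf
  positivity

lemma gaussPdf_pos {s : ℝ} (hs : s ≠ 0) (x : ℝ) : 0 < gaussPdf s x := by
  unfold gaussPdf
  have h : 0 < 2 * Real.pi * s ^ 2 := by positivity
  positivity

lemma gaussPdf_scale {τ : ℝ} (hτ : 0 < τ) (s z : ℝ) :
    gaussPdf (τ * s) (τ * z) = τ⁻¹ * gaussPdf s z := by
  unfold gaussPdf
  have h1 : 2 * Real.pi * (τ * s) ^ 2 = τ ^ 2 * (2 * Real.pi * s ^ 2) := by ring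
  have h2 : Real.sqrt (τ ^ 2 * (2 * Real.pi * s ^ 2))
      = τ * Real.sqrt (2 * Real.pi * s ^ 2) := by
    rw [Real.sqrt_mul (sq_nonneg τ), Real.sqrt_sq hτ.le]
  have h3 : -((τ * z) ^ 2) / (2 * (τ * s) ^ 2) = -(z ^ 2) / (2 * s ^ 2) := by
    rw [show (τ * z) ^ 2 = τ ^ 2 * z ^ 2 by ring, show 2 * (τ * s) ^ 2 = τ ^ 2 * (2 * s ^ 2) by
      ring, neg_div, neg_div, mul_div_mul_left _ _ (by positivity : τ ^ 2 ≠ 0)]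
  rw [h1, h2, h3, mul_inv]
  ring

lemma repMix_pos {p τ σ : ℝ} (hp : p ∈ Set.Ioo (0 : ℝ) 1) (hτ : τ ≠ 0) (hσ : σ ≠ 0)
    (μ δ x : ℝ) : 0 < repMix p μ τ δ σ x := by
  have h1 := gaussPdf_pos hτ (x - μ)
  have h2 := gaussPdf_pos (mul_ne_zero hτ hσ) (x - μ - τ * δ)
  have := hp.1; have := hp.2
  unfold repMix
  nlinarith

lemma repMix_scale {τ : ℝ} (hτ : 0 < τ) (q μ δ' σ' y : ℝ) :
    repMix q μ τ δ' σ' (τ * y + μ) = τ⁻¹ * repMix q 0 1 δ' σ' y := by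
  unfold repMix
  rw [show τ * y + μ - μ = τ * y by ring, show τ * y - τ * δ' = τ * (y - δ') by ring,
    show gaussPdf τ (τ * y) = gaussPdf (τ * 1) (τ * y) by rw [mul_one],
    gaussPdf_scale hτ, gaussPdf_scale hτ]
  simp only [sub_zero, one_mul]
  ring

lemma hasDerivAt_gaussPdf (s x : ℝ) :
    HasDerivAt (gaussPdf s) (gaussPdf s x * (-x / s ^ 2)) x := by
  have h1 : HasDerivAt (fun x : ℝ => -(x ^ 2) / (2 * s ^ 2)) (-x / s ^ 2) x := by
    have h := ((hasDerivAt_pow 2 x).neg.div_const (2 * s ^ 2))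
    refine h.congr_deriv ?_
    push_cast [pow_one]
    rcases eq_or_ne s 0 with hs | hs
    · simp [hs]
    · rw [← mul_neg, mul_div_mul_left _ _ two_ne_zero]
  have h2 := h1.exp.const_mul (Real.sqrt (2 * Real.pi * s ^ 2))⁻¹
  exact h2.congr_deriv (by unfold gaussPdf; ring)

def mixRef (p δ σ y : ℝ) : ℝ := p * gaussPdf 1 y + (1 - p) * gaussPdf σ (y - δ)

lemma mixRef_eq (p δ σ y : ℝ) : repMix p 0 1 δ σ y = mixRef p δ σ y := by
  unfold repMix mixRef
  norm_num

lemma mixRef_pos {p σ : ℝ} (hp : p ∈ Set.Ioo (0 : ℝ) 1) (hσ : σ ≠ 0) (δ y : ℝ) :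
    0 < mixRef p δ σ y := by
  rw [← mixRef_eq]
  exact repMix_pos hp one_ne_zero hσ 0 δ y

def mixRefD (p δ σ y : ℝ) : ℝ :=
  p * (gaussPdf 1 y * (-y / 1 ^ 2)) + (1 - p) * (gaussPdf σ (y - δ) * (-(y - δ) / σ ^ 2))

lemma hasDerivAt_mixRef (p δ σ y : ℝ) :
    HasDerivAt (mixRef p δ σ) (mixRefD p δ σ y) y := by
  have h1 := (hasDerivAt_gaussPdf 1 y).const_mul p
  have h2 : HasDerivAt (fun y => gaussPdf σ (y - δ)) (gaussPdf σ (y - δ) * (-(y - δ) / σ ^ 2)) y := by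
    have h := (hasDerivAt_gaussPdf σ (y - δ)).comp y ((hasDerivAt_id y).sub_const δ)
    exact h.congr_deriv (mul_one _)
  exact h1.add (h2.const_mul (1 - p))

def mixScore (p δ σ y : ℝ) : ℝ := mixRefD p δ σ y / mixRef p δ σ y

lemma hasDerivAt_log_mixRef {p σ : ℝ} (hp : p ∈ Set.Ioo (0 : ℝ) 1) (hσ : σ ≠ 0) (δ y : ℝ) :
    HasDerivAt (fun z => Real.log (mixRef p δ σ z)) (mixScore p δ σ y) y :=
  (hasDerivAt_mixRef p δ σ y).log (mixRef_pos hp hσ δ y).ne'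

lemma deriv_log_eq_of_scale {f g : ℝ → ℝ} {c t0 : ℝ} (hc : 0 < c)
    (hfg : ∀ t, f t = c * g t) (hg : ∀ᶠ t in nhds t0, 0 < g t) :
    deriv (fun t => Real.log (f t)) t0 = deriv (fun t => Real.log (g t)) t0 := by
  have h : (fun t => Real.log (f t)) =ᶠ[nhds t0]
      fun t => Real.log c + Real.log (g t) := by
    filter_upwards [hg] with t ht
    rw [hfg t, Real.log_mul hc.ne' ht.ne']
  rw [h.deriv_eq, deriv_const_add]

lemma deriv_log_mu {p σ : ℝ} (hp : p ∈ Set.Ioo (0 : ℝ) 1) (hσ : σ ≠ 0) {τ : ℝ} (hτ : 0 < τ)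
    (μ δ y : ℝ) :
    deriv (fun t => Real.log (repMix p t τ δ σ (τ * y + μ))) μ
      = mixScore p δ σ y * (-1 / τ) := by
  set x := τ * y + μ with hx
  have hfun : ∀ t : ℝ, repMix p t τ δ σ x = τ⁻¹ * mixRef p δ σ ((x - t) / τ) := by
    intro t
    have h := repMix_scale hτ p t δ σ ((x - t) / τ)
    rw [show τ * ((x - t) / τ) + t = x by field_simp; ring] at h
    rw [h, mixRef_eq]
  have hpos : ∀ t : ℝ, 0 < mixRef p δ σ ((x - t) / τ) := fun t => mixRef_pos hp hσ _ _
  have heq : (fun t => Real.log (repMix p t τ δ σ x))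
      = fun t => Real.log τ⁻¹ + Real.log (mixRef p δ σ ((x - t) / τ)) := by
    funext t
    rw [hfun t, Real.log_mul (by positivity) (hpos t).ne']
  rw [heq, deriv_const_add]
  have hinner : HasDerivAt (fun t : ℝ => (x - t) / τ) (-1 / τ) μ :=
    ((hasDerivAt_id μ).const_sub x).div_const τ
  have hcomp := (hasDerivAt_log_mixRef hp hσ δ ((x - μ) / τ)).comp μ hinner
  have hy : (x - μ) / τ = y := by rw [hx]; field_simp; ring
  rw [hy] at hcomp
  exact hcomp.deriv

lemma deriv_log_tau {p σ : ℝ} (hp : p ∈ Set.Ioo (0 : ℝ) 1) (hσ : σ ≠ 0) {τ : ℝ} (hτ : 0 < τ)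
    (μ δ y : ℝ) :
    deriv (fun t => Real.log (repMix p μ t δ σ (τ * y + μ))) τ
      = -τ⁻¹ + mixScore p δ σ y * (τ * y * -(τ ^ 2)⁻¹) := by
  set x := τ * y + μ with hx
  have hfun : ∀ t : ℝ, 0 < t → repMix p μ t δ σ x = t⁻¹ * mixRef p δ σ (τ * y * t⁻¹) := by
    intro t ht
    have h := repMix_scale ht p μ δ σ ((x - μ) / t)
    rw [show t * ((x - μ) / t) + μ = x by field_simp; ring] at h
    rw [h, mixRef_eq, show (x - μ) / t = τ * y * t⁻¹ by rw [hx]; ring]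
  have heq : (fun t => Real.log (repMix p μ t δ σ x)) =ᶠ[nhds τ]
      fun t => Real.log t⁻¹ + Real.log (mixRef p δ σ (τ * y * t⁻¹)) := by
    filter_upwards [eventually_gt_nhds hτ] with t ht
    rw [hfun t ht, Real.log_mul (by positivity) (mixRef_pos hp hσ _ _).ne']
  rw [heq.deriv_eq]
  have h1 : HasDerivAt (fun t : ℝ => Real.log t⁻¹) (-τ⁻¹) τ := by
    have : (fun t : ℝ => Real.log t⁻¹) = fun t : ℝ => -Real.log t := by
      funext t; rw [Real.log_inv]
    rw [this]
    exact (Real.hasDerivAt_log hτ.ne').neg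
  have hinner : HasDerivAt (fun t : ℝ => τ * y * t⁻¹) (τ * y * -(τ ^ 2)⁻¹) τ :=
    (hasDerivAt_inv hτ.ne').const_mul (τ * y)
  have h2 := (hasDerivAt_log_mixRef hp hσ δ (τ * y * τ⁻¹)).comp τ hinner
  rw [show τ * y * τ⁻¹ = y by field_simp] at h2
  exact (h1.add h2).deriv

lemma repScore_scale {p τ σ : ℝ} (hp : p ∈ Set.Ioo (0 : ℝ) 1) (hτ : 0 < τ) (hσ : σ ≠ 0)
    (μ δ y : ℝ) (a : Fin 5) :
    repScore a p μ τ δ σ (τ * y + μ)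
      = ![1, τ⁻¹, τ⁻¹, 1, 1] a * repScore a p 0 1 δ σ y := by
  fin_cases a <;>
    simp only [repScore, Fin.reduceFinMk, Fin.isValue, Fin.zero_eta, Fin.mk_one, Fin.reduceEq,
      reduceIte, Matrix.cons_val_zero,
      Matrix.cons_val_one, Matrix.head_cons, Matrix.cons_val_two, Matrix.tail_cons,
      Matrix.cons_val_three, Matrix.cons_val_four, one_mul]
  · -- a = 0
    exact deriv_log_eq_of_scale (by positivity) (fun t => repMix_scale hτ t μ δ σ y)
      ((by unfold repMix; fun_prop : Continuous fun t => repMix t 0 1 δ σ y).continuousAt.eventually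
        (eventually_gt_nhds (repMix_pos hp one_ne_zero hσ 0 δ y)))
  · -- a = 1
    have hA := deriv_log_mu hp hσ hτ μ δ y
    have hB := deriv_log_mu hp hσ one_pos 0 δ y
    rw [show (1 : ℝ) * y + 0 = y by ring] at hB
    rw [hA, hB]; ring
  · -- a = 2
    have hA := deriv_log_tau hp hσ hτ μ δ y
    have hB := deriv_log_tau hp hσ one_pos 0 δ y
    rw [show (1 : ℝ) * y + 0 = y by ring] at hB
    rw [hA, hB]
    generalize mixScore p δ σ y = S
    field_simp
  · -- a = 3
    exact deriv_log_eq_of_scale (by positivity) (fun t => repMix_scale hτ p μ t σ y)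
      (Filter.Eventually.of_forall fun t => by
        have h1 := gaussPdf_pos one_ne_zero (y - 0)
        have h2 := gaussPdf_nonneg (1 * σ) (y - 0 - 1 * t)
        have := hp.1; have := hp.2
        unfold repMix; nlinarith)
  · -- a = 4
    exact deriv_log_eq_of_scale (by positivity) (fun t => repMix_scale hτ p μ δ t y)
      (Filter.Eventually.of_forall fun t => by
        have h1 := gaussPdf_pos one_ne_zero (y - 0)
        have h2 := gaussPdf_nonneg (1 * t) (y - 0 - 1 * δ)
        have := hp.1; have := hp.2
        unfold repMix; nlinarith)

lemma repFisher_entry_scale {p τ σ : ℝ} (hp : p ∈ Set.Ioo (0 : ℝ) 1) (hτ : 0 < τ)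
    (hσ : σ ≠ 0) (μ δ : ℝ) (a b : Fin 5) :
    repFisher p μ τ δ σ a b
      = ![1, τ⁻¹, τ⁻¹, 1, 1] a * repFisher p 0 1 δ σ a b * ![1, τ⁻¹, τ⁻¹, 1, 1] b := by
  set d : Fin 5 → ℝ := ![1, τ⁻¹, τ⁻¹, 1, 1] with hd
  set F : ℝ → ℝ := fun x =>
    repScore a p μ τ δ σ x * repScore b p μ τ δ σ x * repMix p μ τ δ σ x with hF
  set F0 : ℝ → ℝ := fun x =>
    repScore a p 0 1 δ σ x * repScore b p 0 1 δ σ x * repMix p 0 1 δ σ x with hF0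
  have key : ∀ y : ℝ, F (τ * y + μ) = (d a * d b * τ⁻¹) * F0 y := by
    intro y
    rw [hF, hF0]
    simp only
    rw [repScore_scale hp hτ hσ μ δ y a, repScore_scale hp hτ hσ μ δ y b, repMix_scale hτ]
    ring
  have h1 : (∫ y : ℝ, F (τ * y + μ)) = |τ⁻¹| • ∫ x : ℝ, F (x + μ) :=
    MeasureTheory.Measure.integral_comp_mul_left (fun z => F (z + μ)) τ
  have h2 : (∫ x : ℝ, F (x + μ)) = ∫ x : ℝ, F x :=
    MeasureTheory.integral_add_right_eq_self F μ
  have h3 : (∫ y : ℝ, F (τ * y + μ)) = (d a * d b * τ⁻¹) * ∫ y : ℝ, F0 y := by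
    simp_rw [key]
    exact MeasureTheory.integral_const_mul _ _
  have habs : |τ⁻¹| = τ⁻¹ := abs_of_pos (by positivity)
  have h4 : τ⁻¹ * (∫ x : ℝ, F x) = (d a * d b * τ⁻¹) * ∫ y : ℝ, F0 y := by
    rw [← h3, h1, h2, habs, smul_eq_mul]
  have hrep : repFisher p μ τ δ σ a b = ∫ x : ℝ, F x := rfl
  have hrep0 : repFisher p 0 1 δ σ a b = ∫ y : ℝ, F0 y := rfl
  rw [hrep, hrep0]
  apply mul_left_cancel₀ (show (τ⁻¹ : ℝ) ≠ 0 by positivity)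
  rw [h4]
  ring

lemma repFisher_det_scale {p τ σ : ℝ} (hp : p ∈ Set.Ioo (0 : ℝ) 1) (hτ : 0 < τ)
    (hσ : σ ≠ 0) (μ δ : ℝ) :
    (repFisher p μ τ δ σ).det = τ⁻¹ ^ 4 * (repFisher p 0 1 δ σ).det := by
  have hmat : repFisher p μ τ δ σ
      = Matrix.diagonal ![1, τ⁻¹, τ⁻¹, 1, 1] * repFisher p 0 1 δ σ
          * Matrix.diagonal ![1, τ⁻¹, τ⁻¹, 1, 1] := by
    ext a b
    rw [Matrix.mul_diagonal, Matrix.diagonal_mul, repFisher_entry_scale hp hτ hσ μ δ a b]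
  rw [hmat, Matrix.det_mul, Matrix.det_mul, Matrix.det_diagonal, Fin.prod_univ_five]
  simp only [Matrix.cons_val_zero, Matrix.cons_val_one, Matrix.head_cons, Matrix.cons_val_two,
    Matrix.tail_cons, Matrix.cons_val_three, Matrix.cons_val_four]
  ring

lemma zpow_neg4 (τ : ℝ) : τ ^ (-4 : ℤ) = τ⁻¹ ^ 4 := by
  rw [show (-4 : ℤ) = -((4 : ℕ) : ℤ) by norm_num, zpow_neg, zpow_natCast, inv_pow]

lemma repFisher_sqrt_det_scale {p τ σ : ℝ} (hp : p ∈ Set.Ioo (0 : ℝ) 1) (hτ : 0 < τ)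
    (hσ : σ ≠ 0) (μ δ : ℝ) :
    Real.sqrt (repFisher p μ τ δ σ).det
      = τ ^ (-2 : ℤ) * Real.sqrt (repFisher p 0 1 δ σ).det := by
  rw [repFisher_det_scale hp hτ hσ μ δ, ← zpow_neg4 τ,
    show τ ^ (-4 : ℤ) = (τ ^ (-2 : ℤ)) ^ 2 by
      rw [← zpow_natCast (τ ^ (-2 : ℤ)) 2, ← zpow_mul]; norm_num,
    Real.sqrt_mul (sq_nonneg _), Real.sqrt_sq (zpow_nonneg hτ.le _)]


/-- `det I(p, μ, τ, δ, σ) = τ⁻⁴ det I(p, 0, 1, δ, σ)`.  In particular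
the Jeffreys prior `√(det I(θ))` is constant in the reference location `μ` and
proportional to `τ⁻²` in the reference scale `τ`, hence improper: its integral over
`(μ, τ) ∈ ℝ × (0, ∞)` is `0` or `+∞`. -/
theorem repFisher_det_scaling (p μ τ δ σ : ℝ) (hp : p ∈ Set.Ioo (0 : ℝ) 1)
    (hτ : 0 < τ) (hσ : 0 < σ) :
    (repFisher p μ τ δ σ).det = τ ^ (-4 : ℤ) * (repFisher p 0 1 δ σ).det ∧
    Real.sqrt (repFisher p μ τ δ σ).det =
      τ ^ (-2 : ℤ) * Real.sqrt (repFisher p 0 1 δ σ).det ∧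
    ((∫⁻ v : ℝ × ℝ in Set.univ ×ˢ Set.Ioi (0 : ℝ),
        ENNReal.ofReal (Real.sqrt (repFisher p v.1 v.2 δ σ).det)) = 0 ∨
     (∫⁻ v : ℝ × ℝ in Set.univ ×ˢ Set.Ioi (0 : ℝ),
        ENNReal.ofReal (Real.sqrt (repFisher p v.1 v.2 δ σ).det)) = ⊤) := by
  refine ⟨by rw [repFisher_det_scale hp hτ hσ.ne' μ δ, zpow_neg4],
    repFisher_sqrt_det_scale hp hτ hσ.ne' μ δ, ?_⟩
  set c : ℝ := Real.sqrt (repFisher p 0 1 δ σ).det with hc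
  have hc0 : 0 ≤ c := Real.sqrt_nonneg _
  have hS : MeasurableSet ((Set.univ : Set ℝ) ×ˢ Set.Ioi (0 : ℝ)) :=
    MeasurableSet.univ.prod measurableSet_Ioi
  rcases eq_or_lt_of_le hc0 with hczero | hcpos
  · left
    rw [MeasureTheory.setLIntegral_congr_fun hS ?_,
      MeasureTheory.lintegral_zero]
    rintro ⟨m, t⟩ ⟨-, ht⟩
    simp only
    rw [repFisher_sqrt_det_scale hp ht hσ.ne' m δ, ← hc, ← hczero, mul_zero,
      ENNReal.ofReal_zero]
  · right
    rw [eq_top_iff]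
    set T : Set (ℝ × ℝ) := Set.univ ×ˢ Set.Ioo (1 : ℝ) 2 with hT
    have hTmeas : MeasurableSet T := MeasurableSet.univ.prod measurableSet_Ioo
    have hTS : T ⊆ Set.univ ×ˢ Set.Ioi (0 : ℝ) :=
      Set.prod_mono subset_rfl (fun x hx => lt_trans one_pos hx.1)
    have hvolT : volume T = ⊤ := by
      rw [hT, MeasureTheory.Measure.volume_eq_prod, MeasureTheory.Measure.prod_prod,
        Real.volume_univ, Real.volume_Ioo]
      norm_num
    have hbound : ∀ v : ℝ × ℝ,
        T.indicator (fun _ => ENNReal.ofReal (c / 4)) v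
          ≤ ENNReal.ofReal (Real.sqrt (repFisher p v.1 v.2 δ σ).det) := by
      intro v
      by_cases hv : v ∈ T
      · rw [Set.indicator_of_mem hv]
        obtain ⟨-, hv2⟩ := hv
        have ht0 : 0 < v.2 := lt_trans one_pos hv2.1
        rw [repFisher_sqrt_det_scale hp ht0 hσ.ne' v.1 δ, ← hc]
        apply ENNReal.ofReal_le_ofReal
        have hz : v.2 ^ (-2 : ℤ) = (v.2 ^ 2)⁻¹ := by
          rw [show (-2 : ℤ) = -((2 : ℕ) : ℤ) by norm_num, zpow_neg, zpow_natCast]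
        rw [hz]
        have h4 : (4 : ℝ)⁻¹ ≤ (v.2 ^ 2)⁻¹ := by
          apply inv_anti₀ (by positivity)
          nlinarith [hv2.1, hv2.2]
        calc c / 4 = 4⁻¹ * c := by ring
          _ ≤ (v.2 ^ 2)⁻¹ * c := mul_le_mul_of_nonneg_right h4 hc0
      · rw [Set.indicator_of_notMem hv]
        exact zero_le
    calc (⊤ : ℝ≥0∞) = ENNReal.ofReal (c / 4) * volume T := by
          rw [hvolT, ENNReal.mul_top (by simp [ENNReal.ofReal_eq_zero]; positivity)]
      _ = ∫⁻ v in T, ENNReal.ofReal (c / 4) ∂(volume.restrict (Set.univ ×ˢ Set.Ioi (0 : ℝ))) := by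
          rw [MeasureTheory.setLIntegral_const, MeasureTheory.Measure.restrict_apply hTmeas,
            Set.inter_eq_left.mpr hTS]
      _ = ∫⁻ v, T.indicator (fun _ => ENNReal.ofReal (c / 4)) v
            ∂(volume.restrict (Set.univ ×ˢ Set.Ioi (0 : ℝ))) := by
          exact (MeasureTheory.lintegral_indicator hTmeas _).symm
      _ ≤ ∫⁻ v in Set.univ ×ˢ Set.Ioi (0 : ℝ),
            ENNReal.ofReal (Real.sqrt (repFisher p v.1 v.2 δ σ).det) :=
          MeasureTheory.lintegral_mono hbound
end
end

section
/- Fix k ≥ 3, weights p₁, …, p_k > 0 with Σ_ℓ p_ℓ = 1, and standard deviations σ₁, …, σ_k > 0, and let x₁, …, x_n ∈ ℝ (n ≥ 1) be arbitrary observations. Then the posterior of the means derived from the Jeffreys prior is improper: ∫_{ℝ^k} [ Π_{i=1}^n g(x_i; μ) ] · √(det I(μ)) dμ = +∞, where g(x;μ) = Σ_{ℓ=1}^k p_ℓ φ_{σ_ℓ}(x − μ_ℓ) is the mixture likelihood contribution and I(μ) is the mean Fisher matrix. -/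
open MeasureTheory

noncomputable section

open Real Filter

lemma gaussPdf_pos_s15 {σ : ℝ} (hσ : 0 < σ) (x : ℝ) : 0 < gaussPdf σ x := by
  have : 0 < 2 * Real.pi * σ ^ 2 := by positivity
  exact mul_pos (inv_pos.2 (Real.sqrt_pos.2 this)) (Real.exp_pos _)

lemma gaussPdf_le {σ : ℝ} (hσ : 0 < σ) (x : ℝ) :
    gaussPdf σ x ≤ (Real.sqrt (2 * Real.pi * σ ^ 2))⁻¹ := by
  have h1 : Real.exp (-(x ^ 2) / (2 * σ ^ 2)) ≤ 1 := by
    rw [Real.exp_le_one_iff]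
    have : 0 ≤ x ^ 2 / (2 * σ ^ 2) := by positivity
    rw [neg_div]; linarith
  have h2 : (0:ℝ) ≤ (Real.sqrt (2 * Real.pi * σ ^ 2))⁻¹ := by positivity
  calc gaussPdf σ x ≤ (Real.sqrt (2 * Real.pi * σ ^ 2))⁻¹ * 1 :=
        mul_le_mul_of_nonneg_left h1 h2
    _ = _ := mul_one _

lemma continuous_gaussPdf (σ : ℝ) : Continuous (gaussPdf σ) := by
  unfold gaussPdf; fun_prop

lemma gaussMix_pos {k : ℕ} {p σ : Fin k → ℝ} (hk : 0 < k) (hp : ∀ ℓ, 0 < p ℓ)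
    (hσ : ∀ ℓ, 0 < σ ℓ) (μ : Fin k → ℝ) (x : ℝ) : 0 < gaussMix p σ μ x := by
  apply Finset.sum_pos (fun ℓ _ => mul_pos (hp ℓ) (gaussPdf_pos_s15 (hσ ℓ) _))
  exact Finset.univ_nonempty_iff.2 (Fin.pos_iff_nonempty.1 hk)

lemma le_gaussMix {k : ℕ} {p σ : Fin k → ℝ} (hp : ∀ ℓ, 0 < p ℓ)
    (hσ : ∀ ℓ, 0 < σ ℓ) (μ : Fin k → ℝ) (x : ℝ) (j : Fin k) :
    p j * gaussPdf (σ j) (x - μ j) ≤ gaussMix p σ μ x := by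
  apply Finset.single_le_sum (f := fun ℓ => p ℓ * gaussPdf (σ ℓ) (x - μ ℓ))
    (fun ℓ _ => le_of_lt (mul_pos (hp ℓ) (gaussPdf_pos_s15 (hσ ℓ) _))) (Finset.mem_univ j)

lemma gaussMix_le {k : ℕ} {p σ : Fin k → ℝ} (hp : ∀ ℓ, 0 < p ℓ)
    (hσ : ∀ ℓ, 0 < σ ℓ) (μ : Fin k → ℝ) (x : ℝ) :
    gaussMix p σ μ x ≤ ∑ ℓ, p ℓ * (Real.sqrt (2 * Real.pi * σ ℓ ^ 2))⁻¹ :=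
  Finset.sum_le_sum fun ℓ _ => mul_le_mul_of_nonneg_left (gaussPdf_le (hσ ℓ) _) (hp ℓ).le

lemma continuous_gaussMix {k : ℕ} (p σ μ : Fin k → ℝ) : Continuous (gaussMix p σ μ) := by
  unfold gaussMix
  exact continuous_finset_sum _ fun ℓ _ =>
    (continuous_const.mul ((continuous_gaussPdf (σ ℓ)).comp (continuous_id.sub continuous_const)))

-- t^2 ≤ (2/b) exp((b/2) t^2)
lemma sq_le_exp {b t : ℝ} (hb : 0 < b) : t ^ 2 ≤ (2 / b) * Real.exp (b / 2 * t ^ 2) := by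
  have h := Real.add_one_le_exp (b / 2 * t ^ 2)
  have h2 : b / 2 * t ^ 2 ≤ Real.exp (b / 2 * t ^ 2) := by nlinarith [sq_nonneg t]
  calc t ^ 2 = (2 / b) * (b / 2 * t ^ 2) := by field_simp
    _ ≤ (2 / b) * Real.exp (b / 2 * t ^ 2) := by
        apply mul_le_mul_of_nonneg_left h2; positivity

lemma sq_mul_exp_le {b : ℝ} (hb : 0 < b) (t : ℝ) :
    t ^ 2 * Real.exp (-b * t ^ 2) ≤ (2 / b) * Real.exp (-(b / 2) * t ^ 2) := by
  calc t ^ 2 * Real.exp (-b * t ^ 2)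
      ≤ (2 / b) * Real.exp (b / 2 * t ^ 2) * Real.exp (-b * t ^ 2) :=
        mul_le_mul_of_nonneg_right (sq_le_exp hb) (Real.exp_pos _).le
    _ = (2 / b) * Real.exp (-(b / 2) * t ^ 2) := by
        rw [mul_assoc, ← Real.exp_add]; ring_nf

lemma integrable_sq_gauss {b : ℝ} (hb : 0 < b) :
    Integrable (fun t : ℝ => t ^ 2 * Real.exp (-b * t ^ 2)) := by
  apply Integrable.mono' ((integrable_exp_neg_mul_sq (by positivity : (0:ℝ) < b / 2)).const_mul (2 / b))
  · exact (continuous_pow 2 |>.mul (Real.continuous_exp.comp (by fun_prop))).aestronglyMeasurable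
  · filter_upwards with t
    rw [Real.norm_eq_abs, abs_of_nonneg (by positivity)]
    exact sq_mul_exp_le hb t

lemma integral_sq_gauss_pos {b : ℝ} (hb : 0 < b) :
    0 < ∫ t : ℝ, t ^ 2 * Real.exp (-b * t ^ 2) := by
  rw [integral_pos_iff_support_of_nonneg (fun t => by positivity) (integrable_sq_gauss hb)]
  have hs : Set.Ioi (0:ℝ) ⊆ Function.support fun t : ℝ => t ^ 2 * Real.exp (-b * t ^ 2) := by
    intro t ht
    have : (0:ℝ) < t := ht
    simp only [Function.mem_support]
    positivity
  calc (0:ENNReal) < volume (Set.Ioi (0:ℝ)) := by simp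
    _ ≤ _ := measure_mono hs

lemma integral_sq_gauss_le {b : ℝ} (hb : 0 < b) :
    (∫ t : ℝ, t ^ 2 * Real.exp (-b * t ^ 2)) ≤ (2 / b) * Real.sqrt (Real.pi / (b / 2)) := by
  calc (∫ t : ℝ, t ^ 2 * Real.exp (-b * t ^ 2))
      ≤ ∫ t : ℝ, (2 / b) * Real.exp (-(b / 2) * t ^ 2) := by
        apply integral_mono (integrable_sq_gauss hb)
          ((integrable_exp_neg_mul_sq (by positivity : (0:ℝ) < b / 2)).const_mul (2 / b))
        exact fun t => sq_mul_exp_le hb t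
    _ = (2 / b) * Real.sqrt (Real.pi / (b / 2)) := by
        rw [integral_const_mul, integral_gaussian]

def fIntegrand {k : ℕ} (p σ μ : Fin k → ℝ) (j h : Fin k) (x : ℝ) : ℝ :=
  (x - μ j) * (x - μ h) * gaussPdf (σ j) (x - μ j) * gaussPdf (σ h) (x - μ h) /
    gaussMix p σ μ x

def Kc {k : ℕ} (p σ : Fin k → ℝ) (j : Fin k) : ℝ :=
  Real.sqrt ((Real.sqrt (2 * Real.pi * σ j ^ 2))⁻¹ / p j)

lemma Kc_pos {k : ℕ} {p σ : Fin k → ℝ} (hp : ∀ ℓ, 0 < p ℓ) (hσ : ∀ ℓ, 0 < σ ℓ) (j : Fin k) :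
    0 < Kc p σ j := by
  apply Real.sqrt_pos.2
  have := hσ j; have := hp j
  have h2 : 0 < 2 * Real.pi * σ j ^ 2 := by positivity
  positivity

lemma sqrt_gaussPdf_div {σp p : ℝ} (hσ : 0 < σp) (hp : 0 < p) (u : ℝ) :
    Real.sqrt (gaussPdf σp u / p) =
      Real.sqrt ((Real.sqrt (2 * Real.pi * σp ^ 2))⁻¹ / p) * Real.exp (-(u ^ 2) / (4 * σp ^ 2)) := by
  have h2 : (0:ℝ) ≤ (Real.sqrt (2 * Real.pi * σp ^ 2))⁻¹ / p := by positivity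
  rw [show gaussPdf σp u / p =
      (Real.sqrt (2 * Real.pi * σp ^ 2))⁻¹ / p * Real.exp (-(u ^ 2) / (2 * σp ^ 2)) by
    rw [gaussPdf]; ring]
  rw [Real.sqrt_mul h2, ← Real.exp_half]
  congr 1
  ring

lemma div_sqrt_eq {φ1 φ2 p1 p2 : ℝ} (h1 : 0 < φ1) (h2 : 0 < φ2) (q1 : 0 < p1) (q2 : 0 < p2) :
    φ1 * φ2 / Real.sqrt (p1 * φ1 * (p2 * φ2)) =
      Real.sqrt (φ1 / p1) * Real.sqrt (φ2 / p2) := by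
  have hd : (0:ℝ) < Real.sqrt (p1 * φ1 * (p2 * φ2)) := Real.sqrt_pos.2 (by positivity)
  rw [div_eq_iff (ne_of_gt hd), ← Real.sqrt_mul (by positivity), ← Real.sqrt_mul (by positivity)]
  rw [show φ1 / p1 * (φ2 / p2) * (p1 * φ1 * (p2 * φ2)) = (φ1 * φ2) ^ 2 by field_simp]
  rw [Real.sqrt_sq (by positivity)]

lemma sqrt_le_gaussMix {k : ℕ} {p σ : Fin k → ℝ} (hp : ∀ ℓ, 0 < p ℓ)
    (hσ : ∀ ℓ, 0 < σ ℓ) (μ : Fin k → ℝ) (x : ℝ) (j h : Fin k) :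
    Real.sqrt (p j * gaussPdf (σ j) (x - μ j) * (p h * gaussPdf (σ h) (x - μ h))) ≤
      gaussMix p σ μ x := by
  have h1 := le_gaussMix hp hσ μ x j
  have h2 := le_gaussMix hp hσ μ x h
  have hg : 0 ≤ gaussMix p σ μ x :=
    le_trans (le_of_lt (mul_pos (hp j) (gaussPdf_pos_s15 (hσ j) _))) h1
  calc Real.sqrt (p j * gaussPdf (σ j) (x - μ j) * (p h * gaussPdf (σ h) (x - μ h)))
      ≤ Real.sqrt (gaussMix p σ μ x * gaussMix p σ μ x) := by
        apply Real.sqrt_le_sqrt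
        exact mul_le_mul h1 h2 (le_of_lt (mul_pos (hp h) (gaussPdf_pos_s15 (hσ h) _))) hg
    _ = gaussMix p σ μ x := Real.sqrt_mul_self hg

/-- Master pointwise bound on the Fisher integrand. -/
lemma fIntegrand_abs_le {k : ℕ} {p σ : Fin k → ℝ} (hp : ∀ ℓ, 0 < p ℓ)
    (hσ : ∀ ℓ, 0 < σ ℓ) (μ : Fin k → ℝ) (j h : Fin k) {a : ℝ} (ha : 0 < a)
    (haj : a ≤ (4 * σ j ^ 2)⁻¹) (hah : a ≤ (4 * σ h ^ 2)⁻¹) (x : ℝ) :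
    |fIntegrand p σ μ j h x| ≤
      Kc p σ j * Kc p σ h *
        (|x - μ j| * Real.exp (-a * (x - μ j) ^ 2)) *
        (|x - μ h| * Real.exp (-a * (x - μ h) ^ 2)) := by
  have hk : 0 < k := j.pos
  have hφj := gaussPdf_pos_s15 (hσ j) (x - μ j)
  have hφh := gaussPdf_pos_s15 (hσ h) (x - μ h)
  have hg := gaussMix_pos hk hp hσ μ x
  have expbound : ∀ (c : Fin k), a ≤ (4 * σ c ^ 2)⁻¹ → ∀ u : ℝ,
      Real.exp (-(u ^ 2) / (4 * σ c ^ 2)) ≤ Real.exp (-a * u ^ 2) := by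
    intro c hac u
    apply Real.exp_le_exp.2
    have h4 : (0:ℝ) < 4 * σ c ^ 2 := by have := hσ c; positivity
    rw [neg_div, neg_mul, neg_le_neg_iff, div_eq_mul_inv]
    have := mul_le_mul_of_nonneg_left hac (sq_nonneg u)
    linarith
  have key : gaussPdf (σ j) (x - μ j) * gaussPdf (σ h) (x - μ h) / gaussMix p σ μ x ≤
      Kc p σ j * Real.exp (-a * (x - μ j) ^ 2) * (Kc p σ h * Real.exp (-a * (x - μ h) ^ 2)) := by
    have hsqpos : 0 < Real.sqrt (p j * gaussPdf (σ j) (x - μ j) * (p h * gaussPdf (σ h) (x - μ h))) :=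
      Real.sqrt_pos.2 (by have := hp j; have := hp h; positivity)
    calc gaussPdf (σ j) (x - μ j) * gaussPdf (σ h) (x - μ h) / gaussMix p σ μ x
        ≤ gaussPdf (σ j) (x - μ j) * gaussPdf (σ h) (x - μ h) /
            Real.sqrt (p j * gaussPdf (σ j) (x - μ j) * (p h * gaussPdf (σ h) (x - μ h))) :=
          div_le_div_of_nonneg_left (by positivity) hsqpos (sqrt_le_gaussMix hp hσ μ x j h)
      _ = Real.sqrt (gaussPdf (σ j) (x - μ j) / p j) * Real.sqrt (gaussPdf (σ h) (x - μ h) / p h) :=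
          div_sqrt_eq hφj hφh (hp j) (hp h)
      _ ≤ Kc p σ j * Real.exp (-a * (x - μ j) ^ 2) * (Kc p σ h * Real.exp (-a * (x - μ h) ^ 2)) := by
          rw [sqrt_gaussPdf_div (hσ j) (hp j), sqrt_gaussPdf_div (hσ h) (hp h)]
          unfold Kc
          have kj : (0:ℝ) ≤ Real.sqrt ((Real.sqrt (2 * Real.pi * σ j ^ 2))⁻¹ / p j) := Real.sqrt_nonneg _
          have kh : (0:ℝ) ≤ Real.sqrt ((Real.sqrt (2 * Real.pi * σ h ^ 2))⁻¹ / p h) := Real.sqrt_nonneg _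
          apply mul_le_mul
          · exact mul_le_mul_of_nonneg_left (expbound j haj _) kj
          · exact mul_le_mul_of_nonneg_left (expbound h hah _) kh
          · positivity
          · positivity
  calc |fIntegrand p σ μ j h x|
      = |x - μ j| * |x - μ h| *
          (gaussPdf (σ j) (x - μ j) * gaussPdf (σ h) (x - μ h) / gaussMix p σ μ x) := by
        rw [fIntegrand, abs_div, abs_of_pos hg, abs_mul, abs_mul, abs_mul,
          abs_of_pos hφj, abs_of_pos hφh]
        ring
    _ ≤ |x - μ j| * |x - μ h| *
          (Kc p σ j * Real.exp (-a * (x - μ j) ^ 2) * (Kc p σ h * Real.exp (-a * (x - μ h) ^ 2))) :=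
        mul_le_mul_of_nonneg_left key (by positivity)
    _ = _ := by ring

lemma amgm_exp {a : ℝ} (ha : 0 < a) (u v : ℝ) :
    (|u| * Real.exp (-a * u ^ 2)) * (|v| * Real.exp (-a * v ^ 2)) ≤
      (u ^ 2 * Real.exp (-a * u ^ 2) + v ^ 2 * Real.exp (-a * v ^ 2)) / 2 := by
  have hu1 : Real.exp (-a * u ^ 2) ≤ 1 := Real.exp_le_one_iff.2 (by nlinarith [sq_nonneg u])
  have hv1 : Real.exp (-a * v ^ 2) ≤ 1 := Real.exp_le_one_iff.2 (by nlinarith [sq_nonneg v])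
  have hu0 := Real.exp_pos (-a * u ^ 2)
  have hv0 := Real.exp_pos (-a * v ^ 2)
  have habs : |u| * |v| ≤ (u ^ 2 + v ^ 2) / 2 := by
    nlinarith [sq_nonneg (|u| - |v|), sq_abs u, sq_abs v]
  nlinarith [abs_nonneg u, abs_nonneg v, sq_abs u, sq_abs v,
    mul_pos hu0 hv0, sq_nonneg u, sq_nonneg v,
    mul_le_mul_of_nonneg_right habs (le_of_lt (mul_pos hu0 hv0)),
    mul_le_mul_of_nonneg_left hv1 (mul_nonneg (sq_nonneg u) hu0.le),
    mul_le_mul_of_nonneg_left hu1 (mul_nonneg (sq_nonneg v) hv0.le)]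

/-- Refined pointwise bound with separation. -/
lemma fIntegrand_abs_le' {k : ℕ} {p σ : Fin k → ℝ} (hp : ∀ ℓ, 0 < p ℓ)
    (hσ : ∀ ℓ, 0 < σ ℓ) (μ : Fin k → ℝ) (j h : Fin k) {a T : ℝ} (ha : 0 < a)
    (haj : a ≤ (4 * σ j ^ 2)⁻¹) (hah : a ≤ (4 * σ h ^ 2)⁻¹)
    (hT : 0 ≤ T) (hsep : T ≤ |μ j - μ h|) (x : ℝ) :
    |fIntegrand p σ μ j h x| ≤
      Kc p σ j * Kc p σ h * Real.exp (-(a / 4) * T ^ 2) *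
        (((x - μ j) ^ 2 * Real.exp (-(a / 2) * (x - μ j) ^ 2) +
          (x - μ h) ^ 2 * Real.exp (-(a / 2) * (x - μ h) ^ 2)) / 2) := by
  have hKj := Kc_pos hp hσ j
  have hKh := Kc_pos hp hσ h
  set u := x - μ j with hu
  set v := x - μ h with hv
  have huv : u - v = μ h - μ j := by rw [hu, hv]; ring
  have hsub : T ^ 2 ≤ (u - v) ^ 2 := by
    rw [huv, ← sq_abs (μ h - μ j), abs_sub_comm]
    exact pow_le_pow_left₀ hT hsep 2
  have hsum : T ^ 2 / 2 ≤ u ^ 2 + v ^ 2 := by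
    clear_value u v
    nlinarith [sq_nonneg (u + v), hsub]
  have split : Real.exp (-a * u ^ 2) * Real.exp (-a * v ^ 2) ≤
      Real.exp (-(a / 4) * T ^ 2) *
        (Real.exp (-(a / 2) * u ^ 2) * Real.exp (-(a / 2) * v ^ 2)) := by
    rw [← Real.exp_add, ← Real.exp_add, ← Real.exp_add]
    apply Real.exp_le_exp.2
    nlinarith [hsum]
  calc |fIntegrand p σ μ j h x|
      ≤ Kc p σ j * Kc p σ h * ((|u| * Real.exp (-a * u ^ 2)) * (|v| * Real.exp (-a * v ^ 2))) := by
        have := fIntegrand_abs_le hp hσ μ j h ha haj hah x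
        calc |fIntegrand p σ μ j h x| ≤ _ := this
          _ = Kc p σ j * Kc p σ h * ((|u| * Real.exp (-a * u ^ 2)) * (|v| * Real.exp (-a * v ^ 2))) := by
            ring
    _ ≤ Kc p σ j * Kc p σ h * (Real.exp (-(a / 4) * T ^ 2) *
          ((|u| * Real.exp (-(a / 2) * u ^ 2)) * (|v| * Real.exp (-(a / 2) * v ^ 2)))) := by
        apply mul_le_mul_of_nonneg_left _ (by positivity)
        calc (|u| * Real.exp (-a * u ^ 2)) * (|v| * Real.exp (-a * v ^ 2))
            = (|u| * |v|) * (Real.exp (-a * u ^ 2) * Real.exp (-a * v ^ 2)) := by ring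
          _ ≤ (|u| * |v|) * (Real.exp (-(a / 4) * T ^ 2) *
                (Real.exp (-(a / 2) * u ^ 2) * Real.exp (-(a / 2) * v ^ 2))) :=
              mul_le_mul_of_nonneg_left split (by positivity)
          _ = _ := by ring
    _ ≤ Kc p σ j * Kc p σ h * (Real.exp (-(a / 4) * T ^ 2) *
          ((u ^ 2 * Real.exp (-(a / 2) * u ^ 2) + v ^ 2 * Real.exp (-(a / 2) * v ^ 2)) / 2)) := by
        apply mul_le_mul_of_nonneg_left _ (by positivity)
        exact mul_le_mul_of_nonneg_left (amgm_exp (by positivity) u v) (Real.exp_pos _).le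
    _ = _ := by ring

lemma continuous_fIntegrand {k : ℕ} {p σ : Fin k → ℝ} (hk : 0 < k) (hp : ∀ ℓ, 0 < p ℓ)
    (hσ : ∀ ℓ, 0 < σ ℓ) (μ : Fin k → ℝ) (j h : Fin k) :
    Continuous (fIntegrand p σ μ j h) := by
  apply Continuous.div _ (continuous_gaussMix p σ μ)
    (fun x => ne_of_gt (gaussMix_pos hk hp hσ μ x))
  have c1 : Continuous fun x : ℝ => x - μ j := continuous_id.sub continuous_const
  have c2 : Continuous fun x : ℝ => x - μ h := continuous_id.sub continuous_const
  exact ((c1.mul c2).mul ((continuous_gaussPdf (σ j)).comp c1)).mul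
    ((continuous_gaussPdf (σ h)).comp c2)

lemma integrable_sq_gauss_shift {b : ℝ} (hb : 0 < b) (c : ℝ) :
    Integrable (fun x : ℝ => (x - c) ^ 2 * Real.exp (-b * (x - c) ^ 2)) :=
  (integrable_sq_gauss hb).comp_sub_right c

lemma integral_sq_gauss_shift (b c : ℝ) :
    ∫ x : ℝ, (x - c) ^ 2 * Real.exp (-b * (x - c) ^ 2) =
      ∫ t : ℝ, t ^ 2 * Real.exp (-b * t ^ 2) :=
  integral_sub_right_eq_self (fun t : ℝ => t ^ 2 * Real.exp (-b * t ^ 2)) c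

lemma integrable_bound {k : ℕ} {p σ : Fin k → ℝ} (hp : ∀ ℓ, 0 < p ℓ)
    (hσ : ∀ ℓ, 0 < σ ℓ) (μ : Fin k → ℝ) (j h : Fin k) {a T : ℝ} (ha : 0 < a) :
    Integrable (fun x : ℝ =>
      Kc p σ j * Kc p σ h * Real.exp (-(a / 4) * T ^ 2) *
        (((x - μ j) ^ 2 * Real.exp (-(a / 2) * (x - μ j) ^ 2) +
          (x - μ h) ^ 2 * Real.exp (-(a / 2) * (x - μ h) ^ 2)) / 2)) := by
  have h2 : (0:ℝ) < a / 2 := by positivity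
  exact (((integrable_sq_gauss_shift h2 (μ j)).add (integrable_sq_gauss_shift h2 (μ h))).div_const
    2).const_mul _

lemma integrable_fIntegrand {k : ℕ} {p σ : Fin k → ℝ} (hp : ∀ ℓ, 0 < p ℓ)
    (hσ : ∀ ℓ, 0 < σ ℓ) (μ : Fin k → ℝ) (j h : Fin k) {a : ℝ} (ha : 0 < a)
    (haj : a ≤ (4 * σ j ^ 2)⁻¹) (hah : a ≤ (4 * σ h ^ 2)⁻¹) :
    Integrable (fIntegrand p σ μ j h) := by
  have hk : 0 < k := j.pos
  apply Integrable.mono' (integrable_bound hp hσ μ j h ha (T := 0))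
    (continuous_fIntegrand hk hp hσ μ j h).aestronglyMeasurable
  filter_upwards with x
  rw [Real.norm_eq_abs]
  exact fIntegrand_abs_le' hp hσ μ j h ha haj hah le_rfl (abs_nonneg _) x

lemma abs_integral_fIntegrand_le {k : ℕ} {p σ : Fin k → ℝ} (hp : ∀ ℓ, 0 < p ℓ)
    (hσ : ∀ ℓ, 0 < σ ℓ) (μ : Fin k → ℝ) (j h : Fin k) {a T : ℝ} (ha : 0 < a)
    (haj : a ≤ (4 * σ j ^ 2)⁻¹) (hah : a ≤ (4 * σ h ^ 2)⁻¹)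
    (hT : 0 ≤ T) (hsep : T ≤ |μ j - μ h|) :
    |∫ x : ℝ, fIntegrand p σ μ j h x| ≤
      Kc p σ j * Kc p σ h * Real.exp (-(a / 4) * T ^ 2) *
        ∫ t : ℝ, t ^ 2 * Real.exp (-(a / 2) * t ^ 2) := by
  have h2 : (0:ℝ) < a / 2 := by positivity
  have hint := integrable_fIntegrand hp hσ μ j h ha haj hah
  calc |∫ x : ℝ, fIntegrand p σ μ j h x| ≤ ∫ x : ℝ, |fIntegrand p σ μ j h x| := by
        simpa [Real.norm_eq_abs] using norm_integral_le_integral_norm (fIntegrand p σ μ j h)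
    _ ≤ ∫ x : ℝ, Kc p σ j * Kc p σ h * Real.exp (-(a / 4) * T ^ 2) *
          (((x - μ j) ^ 2 * Real.exp (-(a / 2) * (x - μ j) ^ 2) +
            (x - μ h) ^ 2 * Real.exp (-(a / 2) * (x - μ h) ^ 2)) / 2) := by
        apply integral_mono hint.abs (integrable_bound hp hσ μ j h ha)
        exact fun x => fIntegrand_abs_le' hp hσ μ j h ha haj hah hT hsep x
    _ = Kc p σ j * Kc p σ h * Real.exp (-(a / 4) * T ^ 2) *
          ((∫ x : ℝ, (x - μ j) ^ 2 * Real.exp (-(a / 2) * (x - μ j) ^ 2)) / 2 +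
           (∫ x : ℝ, (x - μ h) ^ 2 * Real.exp (-(a / 2) * (x - μ h) ^ 2)) / 2) := by
        rw [integral_const_mul]
        congr 1
        rw [show ∀ F G : ℝ → ℝ, (fun x => (F x + G x) / 2) = fun x => F x / 2 + G x / 2 from
          fun F G => by funext x; ring]
        rw [integral_add ((integrable_sq_gauss_shift h2 (μ j)).div_const 2)
          ((integrable_sq_gauss_shift h2 (μ h)).div_const 2), integral_div, integral_div]
    _ = _ := by
        rw [integral_sq_gauss_shift, integral_sq_gauss_shift]
        ring

lemma meanFisher_eq {k : ℕ} (p σ μ : Fin k → ℝ) (j h : Fin k) :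
    meanFisher p σ μ j h =
      p j * p h / (σ j ^ 2 * σ h ^ 2) * ∫ x : ℝ, fIntegrand p σ μ j h x := rfl

/-- Uniform bound on Fisher matrix entries, with exponential gain under separation. -/
lemma abs_meanFisher_le {k : ℕ} {p σ : Fin k → ℝ} (hp : ∀ ℓ, 0 < p ℓ)
    (hσ : ∀ ℓ, 0 < σ ℓ) (μ : Fin k → ℝ) (j h : Fin k) {a T : ℝ} (ha : 0 < a)
    (haj : a ≤ (4 * σ j ^ 2)⁻¹) (hah : a ≤ (4 * σ h ^ 2)⁻¹)
    (hT : 0 ≤ T) (hsep : T ≤ |μ j - μ h|) :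
    |meanFisher p σ μ j h| ≤
      p j * p h / (σ j ^ 2 * σ h ^ 2) * (Kc p σ j * Kc p σ h *
        ∫ t : ℝ, t ^ 2 * Real.exp (-(a / 2) * t ^ 2)) * Real.exp (-(a / 4) * T ^ 2) := by
  have hcoef : (0:ℝ) < p j * p h / (σ j ^ 2 * σ h ^ 2) := by
    have := hp j; have := hp h; have := hσ j; have := hσ h; positivity
  rw [meanFisher_eq, abs_mul, abs_of_pos hcoef]
  calc p j * p h / (σ j ^ 2 * σ h ^ 2) * |∫ x : ℝ, fIntegrand p σ μ j h x|
      ≤ p j * p h / (σ j ^ 2 * σ h ^ 2) * (Kc p σ j * Kc p σ h * Real.exp (-(a / 4) * T ^ 2) *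
          ∫ t : ℝ, t ^ 2 * Real.exp (-(a / 2) * t ^ 2)) :=
        mul_le_mul_of_nonneg_left
          (abs_integral_fIntegrand_le hp hσ μ j h ha haj hah hT hsep) hcoef.le
    _ = _ := by ring

/-- Lower bound for the diagonal entries, uniform in `μ`. -/
lemma meanFisher_diag_ge {k : ℕ} {p σ : Fin k → ℝ} (hp : ∀ ℓ, 0 < p ℓ)
    (hσ : ∀ ℓ, 0 < σ ℓ) (μ : Fin k → ℝ) (j : Fin k) :
    p j * p j / (σ j ^ 2 * σ j ^ 2) *
      (((Real.sqrt (2 * Real.pi * σ j ^ 2))⁻¹) ^ 2 /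
          (∑ ℓ, p ℓ * (Real.sqrt (2 * Real.pi * σ ℓ ^ 2))⁻¹) *
        ∫ t : ℝ, t ^ 2 * Real.exp (-(σ j ^ 2)⁻¹ * t ^ 2)) ≤
      meanFisher p σ μ j j := by
  have hk : 0 < k := j.pos
  have hcoef : (0:ℝ) < p j * p j / (σ j ^ 2 * σ j ^ 2) := by
    have := hp j; have := hσ j; positivity
  set M := ∑ ℓ, p ℓ * (Real.sqrt (2 * Real.pi * σ ℓ ^ 2))⁻¹ with hM
  have hMpos : 0 < M := by
    rw [hM]
    apply Finset.sum_pos _ (Finset.univ_nonempty_iff.2 (Fin.pos_iff_nonempty.1 hk))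
    intro ℓ _
    have := hp ℓ; have := hσ ℓ
    have h2 : (0:ℝ) < 2 * Real.pi * σ ℓ ^ 2 := by positivity
    positivity
  set A := (Real.sqrt (2 * Real.pi * σ j ^ 2))⁻¹ with hA
  have hApos : 0 < A := by
    rw [hA]
    have := hσ j
    have h2 : (0:ℝ) < 2 * Real.pi * σ j ^ 2 := by positivity
    positivity
  have hb : (0:ℝ) < (σ j ^ 2)⁻¹ := by have := hσ j; positivity
  rw [meanFisher_eq]
  apply mul_le_mul_of_nonneg_left _ hcoef.le
  have pointwise : ∀ x : ℝ,
      A ^ 2 / M * ((x - μ j) ^ 2 * Real.exp (-(σ j ^ 2)⁻¹ * (x - μ j) ^ 2)) ≤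
        fIntegrand p σ μ j j x := by
    intro x
    have hg := gaussMix_pos hk hp hσ μ x
    have hgM : gaussMix p σ μ x ≤ M := gaussMix_le hp hσ μ x
    have hnum : fIntegrand p σ μ j j x =
        (x - μ j) ^ 2 * (gaussPdf (σ j) (x - μ j)) ^ 2 / gaussMix p σ μ x := by
      rw [fIntegrand]; ring
    have hφ : (gaussPdf (σ j) (x - μ j)) ^ 2 =
        A ^ 2 * Real.exp (-(σ j ^ 2)⁻¹ * (x - μ j) ^ 2) := by
      rw [gaussPdf, hA, mul_pow, ← Real.exp_nat_mul]
      congr 1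
      have := hσ j
      field_simp
      ring
    rw [hnum, hφ]
    calc A ^ 2 / M * ((x - μ j) ^ 2 * Real.exp (-(σ j ^ 2)⁻¹ * (x - μ j) ^ 2))
        = (x - μ j) ^ 2 * (A ^ 2 * Real.exp (-(σ j ^ 2)⁻¹ * (x - μ j) ^ 2)) / M := by ring
      _ ≤ _ := div_le_div_of_nonneg_left (by positivity) hg hgM
  have haj : (4 * σ j ^ 2)⁻¹ ≤ (4 * σ j ^ 2)⁻¹ := le_rfl
  have ha4 : (0:ℝ) < (4 * σ j ^ 2)⁻¹ := by have := hσ j; positivity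
  calc A ^ 2 / M * ∫ t : ℝ, t ^ 2 * Real.exp (-(σ j ^ 2)⁻¹ * t ^ 2)
      = ∫ x : ℝ, A ^ 2 / M * ((x - μ j) ^ 2 * Real.exp (-(σ j ^ 2)⁻¹ * (x - μ j) ^ 2)) := by
        rw [integral_const_mul, integral_sq_gauss_shift]
    _ ≤ ∫ x : ℝ, fIntegrand p σ μ j j x := by
        apply integral_mono ((integrable_sq_gauss_shift hb (μ j)).const_mul _)
          (integrable_fIntegrand hp hσ μ j j ha4 haj haj) pointwise

lemma det_lower_bound {k : ℕ} (M : Matrix (Fin k) (Fin k) ℝ) {d C ε : ℝ}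
    (hd : 0 < d) (hC : 0 ≤ C) (hε : 0 ≤ ε)
    (hdiag : ∀ j, d ≤ M j j) (hCb : ∀ j h, |M j h| ≤ C)
    (hoff : ∀ j h, j ≠ h → |M j h| ≤ ε) :
    d ^ k - (Fintype.card (Equiv.Perm (Fin k)) : ℝ) * (ε * C ^ (k - 1)) ≤ M.det := by
  rw [Matrix.det_apply]
  rw [← Finset.add_sum_erase Finset.univ _ (Finset.mem_univ (1 : Equiv.Perm (Fin k)))]
  have hid : d ^ k ≤ Equiv.Perm.sign (1 : Equiv.Perm (Fin k)) •
      ∏ i, M ((1 : Equiv.Perm (Fin k)) i) i := by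
    simp only [map_one, one_smul, Equiv.Perm.one_apply]
    calc d ^ k = ∏ _i : Fin k, d := by simp
      _ ≤ ∏ i, M i i := Finset.prod_le_prod (fun i _ => hd.le) (fun i _ => hdiag i)
  have hterm : ∀ σ : Equiv.Perm (Fin k), σ ≠ 1 →
      |Equiv.Perm.sign σ • ∏ i, M (σ i) i| ≤ ε * C ^ (k - 1) := by
    intro σ hσ
    have : ∃ i, σ i ≠ i := by
      by_contra hc
      push_neg at hc
      exact hσ (Equiv.ext hc)
    obtain ⟨i₀, hi₀⟩ := this
    have habs : |Equiv.Perm.sign σ • ∏ i, M (σ i) i| = |∏ i, M (σ i) i| := by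
      rcases Int.units_eq_one_or (Equiv.Perm.sign σ) with h | h <;>
        simp [h, Units.smul_def, abs_neg]
    rw [habs, Finset.abs_prod]
    rw [← Finset.mul_prod_erase Finset.univ _ (Finset.mem_univ i₀)]
    have h1 : |M (σ i₀) i₀| ≤ ε := hoff _ _ hi₀
    have h2 : ∏ i ∈ Finset.univ.erase i₀, |M (σ i) i| ≤ C ^ (k - 1) := by
      calc ∏ i ∈ Finset.univ.erase i₀, |M (σ i) i| ≤ ∏ _i ∈ Finset.univ.erase i₀, C :=
            Finset.prod_le_prod (fun i _ => abs_nonneg _) (fun i _ => hCb _ _)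
        _ = C ^ (k - 1) := by
            rw [Finset.prod_const, Finset.card_erase_of_mem (Finset.mem_univ i₀)]
            simp
    exact mul_le_mul h1 h2 (Finset.prod_nonneg fun i _ => abs_nonneg _) hε
  have hrest : -( (Fintype.card (Equiv.Perm (Fin k)) : ℝ) * (ε * C ^ (k - 1))) ≤
      ∑ σ ∈ Finset.univ.erase (1 : Equiv.Perm (Fin k)),
        Equiv.Perm.sign σ • ∏ i, M (σ i) i := by
    have h1 : |∑ σ ∈ Finset.univ.erase (1 : Equiv.Perm (Fin k)),
        Equiv.Perm.sign σ • ∏ i, M (σ i) i| ≤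
        (Fintype.card (Equiv.Perm (Fin k)) : ℝ) * (ε * C ^ (k - 1)) := by
      calc |∑ σ ∈ Finset.univ.erase (1 : Equiv.Perm (Fin k)),
          Equiv.Perm.sign σ • ∏ i, M (σ i) i|
          ≤ ∑ σ ∈ Finset.univ.erase (1 : Equiv.Perm (Fin k)),
            |Equiv.Perm.sign σ • ∏ i, M (σ i) i| := Finset.abs_sum_le_sum_abs _ _
        _ ≤ ∑ _σ ∈ Finset.univ.erase (1 : Equiv.Perm (Fin k)), (ε * C ^ (k - 1)) := by
            apply Finset.sum_le_sum
            intro σ hσ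
            exact hterm σ (Finset.ne_of_mem_erase hσ)
        _ ≤ _ := by
            rw [Finset.sum_const, nsmul_eq_mul]
            apply mul_le_mul_of_nonneg_right _ (by positivity)
            exact_mod_cast Nat.cast_le.2 (le_trans (Finset.card_erase_le)
              (le_of_eq (Finset.card_univ)))
    linarith [neg_abs_le (∑ σ ∈ Finset.univ.erase (1 : Equiv.Perm (Fin k)),
      Equiv.Perm.sign σ • ∏ i, M (σ i) i), h1]
  linarith [hid, hrest]

/-- The unbounded product region used to witness improperness. -/
def regionSet (m : ℕ) (T : ℝ) : Fin (m + 3) → Set ℝ := fun j =>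
  if j = Fin.last (m + 2) then Set.Ici (2 * T * (j : ℕ))
  else Set.Icc (2 * T * (j : ℕ)) (2 * T * (j : ℕ) + 1)

lemma regionSet_meas (m : ℕ) (T : ℝ) (j : Fin (m + 3)) : MeasurableSet (regionSet m T j) := by
  rw [regionSet]
  split
  · exact measurableSet_Ici
  · exact measurableSet_Icc

lemma regionSet_low {m : ℕ} {T : ℝ} {j : Fin (m + 3)} {y : ℝ} (hy : y ∈ regionSet m T j) :
    2 * T * (j : ℕ) ≤ y := by
  rw [regionSet] at hy
  by_cases hj : j = Fin.last (m + 2)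
  · rw [if_pos hj] at hy; exact hy
  · rw [if_neg hj] at hy; exact hy.1

lemma regionSet_high {m : ℕ} {T : ℝ} {j : Fin (m + 3)} {y : ℝ} (hj : j ≠ Fin.last (m + 2))
    (hy : y ∈ regionSet m T j) : y ≤ 2 * T * (j : ℕ) + 1 := by
  rw [regionSet, if_neg hj] at hy
  exact hy.2

lemma regionSet_sep {m : ℕ} {T : ℝ} (hT1 : 1 ≤ T) {μ : Fin (m + 3) → ℝ}
    (hμ : μ ∈ Set.univ.pi (regionSet m T)) {j h : Fin (m + 3)} (hjh : j ≠ h) :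
    T ≤ |μ j - μ h| := by
  have key : ∀ j h : Fin (m + 3), (j : ℕ) < (h : ℕ) → T ≤ μ h - μ j := by
    intro j h hlt
    have hjlast : j ≠ Fin.last (m + 2) := by
      intro hE
      rw [hE] at hlt
      simp only [Fin.val_last] at hlt
      have := h.is_le
      omega
    have h1 := regionSet_high hjlast (hμ j (Set.mem_univ j))
    have h2 := regionSet_low (hμ h (Set.mem_univ h))
    have hcast : ((j : ℕ) : ℝ) + 1 ≤ ((h : ℕ) : ℝ) := by exact_mod_cast hlt
    nlinarith
  rcases lt_or_gt_of_ne (fun hE : (j : ℕ) = (h : ℕ) => hjh (Fin.ext hE)) with hlt | hgt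
  · rw [abs_sub_comm]
    exact le_trans (key j h hlt) (le_abs_self _)
  · exact le_trans (key h j hgt) (le_abs_self _)

lemma regionSet_zero {m : ℕ} {T : ℝ} (hT1 : 1 ≤ T) {μ : Fin (m + 3) → ℝ}
    (hμ : μ ∈ Set.univ.pi (regionSet m T)) : μ 0 ∈ Set.Icc (0 : ℝ) 1 := by
  have h0last : (0 : Fin (m + 3)) ≠ Fin.last (m + 2) := by
    intro hE
    have := congrArg Fin.val hE
    simp [Fin.val_last] at this
  have h1 := regionSet_low (hμ 0 (Set.mem_univ 0))
  have h2 := regionSet_high h0last (hμ 0 (Set.mem_univ 0))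
  have hz : ((0 : Fin (m + 3)) : ℕ) = 0 := rfl
  rw [hz] at h1 h2
  push_cast at h1 h2
  constructor <;> [linarith; linarith]

lemma regionSet_volume (m : ℕ) (T : ℝ) :
    volume (Set.univ.pi (regionSet m T)) = ⊤ := by
  rw [volume_pi_pi]
  rw [← Finset.prod_erase_mul Finset.univ _ (Finset.mem_univ (Fin.last (m + 2)))]
  have h1 : volume (regionSet m T (Fin.last (m + 2))) = ⊤ := by
    rw [regionSet, if_pos rfl]
    simp [Real.volume_Ici]
  have h2 : ∏ j ∈ Finset.univ.erase (Fin.last (m + 2)), volume (regionSet m T j) = 1 := by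
    apply Finset.prod_eq_one
    intro j hj
    rw [regionSet, if_neg (Finset.ne_of_mem_erase hj), Real.volume_Icc]
    norm_num
  rw [h1, h2, one_mul]

set_option maxHeartbeats 1000000

/-- for a Gaussian mixture with `k = m + 3 ≥ 3` components, fixed
positive weights summing to one, fixed positive scales, and any `n ≥ 1` observations
`x₁, …, xₙ`, the posterior of the means derived from the Jeffreys prior is improper:
`∫_{ℝ^k} (∏ᵢ g(xᵢ; μ)) √(det I(μ)) dμ = +∞`. -/
theorem posterior_means_jeffreys_improper (m n : ℕ) (hn : 1 ≤ n)
    (p σ : Fin (m + 3) → ℝ) (hp : ∀ ℓ, 0 < p ℓ) (hsum : ∑ ℓ, p ℓ = 1)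
    (hσ : ∀ ℓ, 0 < σ ℓ) (x : Fin n → ℝ) :
    (∫⁻ μ : Fin (m + 3) → ℝ,
        ENNReal.ofReal
          ((∏ i, gaussMix p σ μ (x i)) * Real.sqrt (meanFisher p σ μ).det)) = ⊤ := by
  classical
  -- the exponential rate
  obtain ⟨smax, hsm, hsm0⟩ : ∃ s : ℝ, (∀ ℓ, σ ℓ ≤ s) ∧ 0 < s :=
    ⟨Finset.univ.sup' Finset.univ_nonempty σ,
      fun ℓ => Finset.le_sup' σ (Finset.mem_univ ℓ),
      lt_of_lt_of_le (hσ 0) (Finset.le_sup' σ (Finset.mem_univ 0))⟩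
  set a : ℝ := (4 * smax ^ 2)⁻¹ with ha_def
  have ha : 0 < a := by rw [ha_def]; positivity
  have haℓ : ∀ ℓ : Fin (m + 3), a ≤ (4 * σ ℓ ^ 2)⁻¹ := by
    intro ℓ
    rw [ha_def]
    apply inv_anti₀ (by have := hσ ℓ; positivity)
    have := pow_le_pow_left₀ (hσ ℓ).le (hsm ℓ) 2
    linarith
  clear_value a
  clear ha_def
  -- uniform entry bound
  set Ba : ℝ := ∫ t : ℝ, t ^ 2 * Real.exp (-(a / 2) * t ^ 2) with hBa_def
  have hBa : 0 < Ba := integral_sq_gauss_pos (by positivity)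
  have hent : ∃ C : ℝ, 0 < C ∧
      (∀ (μ : Fin (m + 3) → ℝ) (j h : Fin (m + 3)), |meanFisher p σ μ j h| ≤ C) ∧
      (∀ (T : ℝ), 0 ≤ T → ∀ (μ : Fin (m + 3) → ℝ) (j h : Fin (m + 3)),
        T ≤ |μ j - μ h| → |meanFisher p σ μ j h| ≤ C * Real.exp (-(a / 4) * T ^ 2)) := by
    set Cent : Fin (m + 3) → Fin (m + 3) → ℝ := fun j h =>
      p j * p h / (σ j ^ 2 * σ h ^ 2) * (Kc p σ j * Kc p σ h * Ba) with hCent_def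
    have hCentpos : ∀ j h, 0 < Cent j h := by
      intro j h
      have := hp j; have := hp h; have := hσ j; have := hσ h
      have := Kc_pos hp hσ j; have := Kc_pos hp hσ h
      rw [hCent_def]; positivity
    refine ⟨Finset.univ.sup' Finset.univ_nonempty
      (fun q : Fin (m + 3) × Fin (m + 3) => Cent q.1 q.2), ?_, ?_, ?_⟩
    · exact lt_of_lt_of_le (hCentpos 0 0)
        (Finset.le_sup' (fun q : Fin (m + 3) × Fin (m + 3) => Cent q.1 q.2)
          (Finset.mem_univ (0, 0)))
    · intro μ j h
      have h1 := abs_meanFisher_le hp hσ μ j h ha (haℓ j) (haℓ h) le_rfl (abs_nonneg _) (T := 0)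
      rw [show Real.exp (-(a / 4) * (0:ℝ) ^ 2) = 1 by norm_num, mul_one] at h1
      exact le_trans h1 (Finset.le_sup' (fun q : Fin (m + 3) × Fin (m + 3) => Cent q.1 q.2)
        (Finset.mem_univ (j, h)))
    · intro T hT μ j h hsep
      have h1 := abs_meanFisher_le hp hσ μ j h ha (haℓ j) (haℓ h) hT hsep
      refine le_trans h1 (mul_le_mul_of_nonneg_right ?_ (Real.exp_pos _).le)
      exact Finset.le_sup' (fun q : Fin (m + 3) × Fin (m + 3) => Cent q.1 q.2)
        (Finset.mem_univ (j, h))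
  obtain ⟨C, hC0, hCb, hCsep⟩ := hent
  -- uniform diagonal lower bound
  have hdiag : ∃ d : ℝ, 0 < d ∧
      ∀ (μ : Fin (m + 3) → ℝ) (j : Fin (m + 3)), d ≤ meanFisher p σ μ j j := by
    set dfun : Fin (m + 3) → ℝ := fun j =>
      p j * p j / (σ j ^ 2 * σ j ^ 2) *
        (((Real.sqrt (2 * Real.pi * σ j ^ 2))⁻¹) ^ 2 /
            (∑ ℓ, p ℓ * (Real.sqrt (2 * Real.pi * σ ℓ ^ 2))⁻¹) *
          ∫ t : ℝ, t ^ 2 * Real.exp (-(σ j ^ 2)⁻¹ * t ^ 2)) with hdfun_def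
    have hdfunpos : ∀ j, 0 < dfun j := by
      intro j
      have h1 := hp j; have h2 := hσ j
      have h3 : (0:ℝ) < 2 * Real.pi * σ j ^ 2 := by positivity
      have h4 : 0 < ∫ t : ℝ, t ^ 2 * Real.exp (-(σ j ^ 2)⁻¹ * t ^ 2) :=
        integral_sq_gauss_pos (by positivity)
      have h5 : 0 < ∑ ℓ, p ℓ * (Real.sqrt (2 * Real.pi * σ ℓ ^ 2))⁻¹ := by
        apply Finset.sum_pos _ Finset.univ_nonempty
        intro ℓ _
        have := hp ℓ; have := hσ ℓ
        have : (0:ℝ) < 2 * Real.pi * σ ℓ ^ 2 := by positivity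
        positivity
      rw [hdfun_def]
      positivity
    refine ⟨Finset.univ.inf' Finset.univ_nonempty dfun, ?_, ?_⟩
    · obtain ⟨j, _, hj⟩ := Finset.exists_mem_eq_inf' Finset.univ_nonempty dfun
      rw [hj]; exact hdfunpos j
    · intro μ j
      exact le_trans (Finset.inf'_le dfun (Finset.mem_univ j)) (meanFisher_diag_ge hp hσ μ j)
  obtain ⟨dm, hdm0, hdiagb⟩ := hdiag
  -- choose the separation threshold T
  set N : ℝ := (Fintype.card (Equiv.Perm (Fin (m + 3))) : ℝ) with hN_def
  have hN : 0 < N := by rw [hN_def]; exact_mod_cast Fintype.card_pos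
  set ε : ℝ := dm ^ (m + 3) / (2 * N * C ^ (m + 3 - 1)) with hε_def
  have hε : 0 < ε := by rw [hε_def]; positivity
  have htend : Tendsto (fun T : ℝ => C * Real.exp (-(a / 4) * T ^ 2)) atTop (nhds 0) := by
    have h1 : Tendsto (fun T : ℝ => (a / 4) * T ^ 2) atTop atTop :=
      (tendsto_pow_atTop two_ne_zero).const_mul_atTop (by positivity)
    have h2 : Tendsto (fun T : ℝ => -(a / 4 * T ^ 2)) atTop atBot :=
      tendsto_neg_atTop_atBot.comp h1
    have h3 : Tendsto (fun T : ℝ => Real.exp (-(a / 4) * T ^ 2)) atTop (nhds 0) := by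
      have h4 := Real.tendsto_exp_atBot.comp h2
      simpa only [Function.comp_def, neg_mul] using h4
    simpa using h3.const_mul C
  obtain ⟨T, hTb, hT1⟩ :=
    ((htend.eventually_lt_const hε).and (eventually_ge_atTop (1:ℝ))).exists
  -- determinant bound on the region
  set S : Set (Fin (m + 3) → ℝ) := Set.univ.pi (regionSet m T) with hS_def
  have hSmeas : MeasurableSet S := MeasurableSet.univ_pi (regionSet_meas m T)
  have hdet : ∀ μ ∈ S, dm ^ (m + 3) / 2 ≤ (meanFisher p σ μ).det := by
    intro μ hμ
    have hoff : ∀ j h : Fin (m + 3), j ≠ h → |meanFisher p σ μ j h| ≤ ε := by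
      intro j h hjh
      exact le_trans (hCsep T (le_trans zero_le_one hT1) μ j h (regionSet_sep hT1 hμ hjh)) hTb.le
    have h1 := det_lower_bound (meanFisher p σ μ) hdm0 hC0.le hε.le
      (fun j => hdiagb μ j) (fun j h => hCb μ j h) hoff
    have h2 : N * (ε * C ^ (m + 3 - 1)) = dm ^ (m + 3) / 2 := by
      rw [hε_def]
      field_simp
    rw [hN_def] at h2
    linarith [h1, h2.symm.le]
  -- likelihood bound on the region
  set L : ℝ := ∏ i, (p 0 * ((Real.sqrt (2 * Real.pi * σ 0 ^ 2))⁻¹ *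
    Real.exp (-((|x i| + 1) ^ 2) / (2 * σ 0 ^ 2)))) with hL_def
  have hLpos : 0 < L := by
    rw [hL_def]
    apply Finset.prod_pos
    intro i _
    have := hp 0; have := hσ 0
    have : (0:ℝ) < 2 * Real.pi * σ 0 ^ 2 := by positivity
    positivity
  have hlik : ∀ μ ∈ S, L ≤ ∏ i, gaussMix p σ μ (x i) := by
    intro μ hμ
    rw [hL_def]
    apply Finset.prod_le_prod
    · intro i _
      have := hp 0; have := hσ 0
      have : (0:ℝ) < 2 * Real.pi * σ 0 ^ 2 := by positivity
      positivity
    · intro i _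
      obtain ⟨hμ0l, hμ0r⟩ := regionSet_zero hT1 hμ
      have hub : (x i - μ 0) ^ 2 ≤ (|x i| + 1) ^ 2 := by
        have h1 : |x i - μ 0| ≤ |x i| + 1 := by
          calc |x i - μ 0| ≤ |x i| + |μ 0| := abs_sub _ _
            _ ≤ |x i| + 1 := by
                have : |μ 0| ≤ 1 := abs_le.2 ⟨by linarith, hμ0r⟩
                linarith
        calc (x i - μ 0) ^ 2 = |x i - μ 0| ^ 2 := (sq_abs _).symm
          _ ≤ (|x i| + 1) ^ 2 := pow_le_pow_left₀ (abs_nonneg _) h1 2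
      have hgp : (Real.sqrt (2 * Real.pi * σ 0 ^ 2))⁻¹ *
          Real.exp (-((|x i| + 1) ^ 2) / (2 * σ 0 ^ 2)) ≤ gaussPdf (σ 0) (x i - μ 0) := by
        rw [gaussPdf]
        have hpos : (0:ℝ) < 2 * Real.pi * σ 0 ^ 2 := by have := hσ 0; positivity
        apply mul_le_mul_of_nonneg_left _ (by positivity)
        apply Real.exp_le_exp.2
        have hσ0 : (0:ℝ) < 2 * σ 0 ^ 2 := by have := hσ 0; positivity
        rw [neg_div, neg_div, neg_le_neg_iff]
        gcongr
      calc p 0 * ((Real.sqrt (2 * Real.pi * σ 0 ^ 2))⁻¹ *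
            Real.exp (-((|x i| + 1) ^ 2) / (2 * σ 0 ^ 2)))
          ≤ p 0 * gaussPdf (σ 0) (x i - μ 0) := mul_le_mul_of_nonneg_left hgp (hp 0).le
        _ ≤ gaussMix p σ μ (x i) := le_gaussMix hp hσ μ (x i) 0
  -- assemble
  set ρ : ℝ := Real.sqrt (dm ^ (m + 3) / 2) with hρ_def
  have hρ : 0 < ρ := by rw [hρ_def]; exact Real.sqrt_pos.2 (by positivity)
  have hptwise : ∀ μ ∈ S, ENNReal.ofReal (L * ρ) ≤
      ENNReal.ofReal ((∏ i, gaussMix p σ μ (x i)) * Real.sqrt (meanFisher p σ μ).det) := by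
    intro μ hμ
    apply ENNReal.ofReal_le_ofReal
    have hsq : ρ ≤ Real.sqrt (meanFisher p σ μ).det := by
      rw [hρ_def]
      exact Real.sqrt_le_sqrt (hdet μ hμ)
    apply mul_le_mul (hlik μ hμ) hsq hρ.le
    exact le_trans hLpos.le (hlik μ hμ)
  have hfinal : (⊤ : ENNReal) ≤ ∫⁻ μ : Fin (m + 3) → ℝ,
      ENNReal.ofReal ((∏ i, gaussMix p σ μ (x i)) * Real.sqrt (meanFisher p σ μ).det) := by
    calc (⊤ : ENNReal) = ENNReal.ofReal (L * ρ) * volume S := by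
          rw [hS_def, regionSet_volume, ENNReal.mul_top]
          exact ne_of_gt (ENNReal.ofReal_pos.2 (by positivity))
      _ = ∫⁻ _μ in S, ENNReal.ofReal (L * ρ) := (setLIntegral_const _ _).symm
      _ ≤ ∫⁻ μ in S,
            ENNReal.ofReal ((∏ i, gaussMix p σ μ (x i)) * Real.sqrt (meanFisher p σ μ).det) :=
          setLIntegral_mono' hSmeas hptwise
      _ ≤ _ := setLIntegral_le_lintegral _ _
  exact top_le_iff.1 hfinal
end
end
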